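/- arXiv:1509.03257 — 7 statements merged into one kernel-verified Lean document; each statement's English description precedes it below -/
import Mathlib

section
/- Let A₁, A₂ be rank-3 real 3×4 matrices with distinct focal points f₁ ≠ f₂ in P^3, and let X ∈ P^3 not lie on the baseline (the line through f₁ and f₂). Then X is the unique point of P^3 mapping to (A₁X, A₂X) under both cameras; i.e., triangulation from two views recovers X uniquely. -/
lemma camera_ker_eq (A : Matrix (Fin 3) (Fin 4) ℝ) (h : A.rank = 3)
    (f : Fin 4 → ℝ) (hf : f ≠ 0) (hk : A.mulVec f = 0) :
    LinearMap.ker A.mulVecLin = Submodule.span ℝ {f} := by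
  have hle : Submodule.span ℝ {f} ≤ LinearMap.ker A.mulVecLin := by
    rw [Submodule.span_singleton_le_iff_mem]
    exact hk
  have hrn := A.mulVecLin.finrank_range_add_finrank_ker
  rw [← Matrix.rank, h] at hrn
  simp only [Module.finrank_fintype_fun_eq_card, Fintype.card_fin] at hrn
  have hker : Module.finrank ℝ (LinearMap.ker A.mulVecLin) = 1 := by omega
  have hsp : Module.finrank ℝ (Submodule.span ℝ {f}) = 1 := finrank_span_singleton hf
  exact (Submodule.eq_of_le_of_finrank_le hle (by rw [hker, hsp])).symm

/-- Triangulation from two views. If `A₁, A₂` are rank-3 cameras with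
distinct focal points `f₁, f₂`, and `X` is a point of `P³` not on the baseline
(the span of `f₁` and `f₂`), then `X` is the unique point of `P³` mapping to
`(A₁X, A₂X)` under both cameras. -/
theorem triangulation_unique (A₁ A₂ : Matrix (Fin 3) (Fin 4) ℝ)
    (h1 : A₁.rank = 3) (h2 : A₂.rank = 3)
    (f₁ f₂ : Fin 4 → ℝ) (hf₁ : f₁ ≠ 0) (hf₂ : f₂ ≠ 0)
    (hk₁ : A₁.mulVec f₁ = 0) (hk₂ : A₂.mulVec f₂ = 0)
    (hdist : ¬ ∃ c : ℝ, f₂ = c • f₁)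
    (X : Fin 4 → ℝ) (hX : X ≠ 0)
    (hXb : X ∉ Submodule.span ℝ ({f₁, f₂} : Set (Fin 4 → ℝ)))
    (X' : Fin 4 → ℝ) (hX' : X' ≠ 0)
    (e1 : ∃ c : ℝ, c ≠ 0 ∧ A₁.mulVec X' = c • A₁.mulVec X)
    (e2 : ∃ c : ℝ, c ≠ 0 ∧ A₂.mulVec X' = c • A₂.mulVec X) :
    ∃ c : ℝ, c ≠ 0 ∧ X' = c • X := by
  obtain ⟨c₁, hc₁, he₁⟩ := e1
  obtain ⟨c₂, hc₂, he₂⟩ := e2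
  have m1 : X' - c₁ • X ∈ LinearMap.ker A₁.mulVecLin := by
    simp [LinearMap.mem_ker, Matrix.mulVecLin_apply, Matrix.mulVec_sub,
      Matrix.mulVec_smul, he₁]
  have m2 : X' - c₂ • X ∈ LinearMap.ker A₂.mulVecLin := by
    simp [LinearMap.mem_ker, Matrix.mulVecLin_apply, Matrix.mulVec_sub,
      Matrix.mulVec_smul, he₂]
  rw [camera_ker_eq A₁ h1 f₁ hf₁ hk₁, Submodule.mem_span_singleton] at m1
  rw [camera_ker_eq A₂ h2 f₂ hf₂ hk₂, Submodule.mem_span_singleton] at m2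
  obtain ⟨a, ha⟩ := m1
  obtain ⟨b, hb⟩ := m2
  by_cases hcc : c₁ = c₂
  · -- a • f₁ = b • f₂
    have hab : a • f₁ = b • f₂ := by
      rw [ha, hb, hcc]
    have hb0 : b = 0 := by
      by_contra hb0
      exact hdist ⟨b⁻¹ * a, by rw [mul_smul, hab, inv_smul_smul₀ hb0]⟩
    have ha0 : a = 0 := by
      rw [hb0, zero_smul] at hab
      rcases smul_eq_zero.mp hab with h | h
      · exact h
      · exact absurd h hf₁
    refine ⟨c₁, hc₁, ?_⟩
    rw [ha0, zero_smul] at ha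
    exact sub_eq_zero.mp ha.symm
  · exfalso
    apply hXb
    have hx : (c₂ - c₁) • X = a • f₁ - b • f₂ := by
      rw [ha, hb]; module
    have hne : c₂ - c₁ ≠ 0 := sub_ne_zero.mpr (Ne.symm hcc)
    have : X = (c₂ - c₁)⁻¹ • (a • f₁ - b • f₂) := by
      rw [← hx, inv_smul_smul₀ hne]
    rw [this]
    refine Submodule.smul_mem _ _ (Submodule.sub_mem _ ?_ ?_)
    · exact Submodule.smul_mem _ _ (Submodule.subset_span (by simp))
    · exact Submodule.smul_mem _ _ (Submodule.subset_span (by simp))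
end

section
/- Let A₁, A₂ be rank-3 real 3×4 matrices with distinct focal points f₁ ≠ f₂. For points u₁, u₂ ∈ P^2 with u₁ ≠ e_{1←2} or u₂ ≠ e_{2←1} (where e_{i←j} = A_i f_j are the epipoles), the 6×6 matrix B = [[A₁,u₁,0],[A₂,0,u₂]] has rank at most 5 if and only if the back-projected lines of u₁ and u₂ intersect in P^3. -/
lemma rank_le_five_iff_ker (M : Matrix (Fin 6) (Fin 6) ℝ) :
    M.rank ≤ 5 ↔ ∃ v : Fin 6 → ℝ, v ≠ 0 ∧ M.mulVec v = 0 := by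
  have h := LinearMap.finrank_range_add_finrank_ker M.mulVecLin
  simp only [Module.finrank_fintype_fun_eq_card, Fintype.card_fin] at h
  rw [Matrix.rank]
  constructor
  · intro hr
    have hk : Module.finrank ℝ (LinearMap.ker M.mulVecLin) ≠ 0 := by omega
    rw [ne_eq, Submodule.finrank_eq_zero] at hk
    obtain ⟨v, hv, hv0⟩ := Submodule.exists_mem_ne_zero_of_ne_bot hk
    exact ⟨v, hv0, hv⟩
  · rintro ⟨v, hv0, hv⟩
    have hk : LinearMap.ker M.mulVecLin ≠ ⊥ := by
      intro hbot
      exact hv0 (by simpa [hbot] using (LinearMap.mem_ker.mpr (by simpa using hv) : v ∈ LinearMap.ker M.mulVecLin))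
    have : Module.finrank ℝ (LinearMap.ker M.mulVecLin) ≠ 0 := by
      rwa [ne_eq, Submodule.finrank_eq_zero]
    omega

def triMat (A₁ A₂ : Matrix (Fin 3) (Fin 4) ℝ) (u₁ u₂ : Fin 3 → ℝ) :
    Matrix (Fin 6) (Fin 6) ℝ :=
  Matrix.of fun i j =>
    if hi : (i : ℕ) < 3 then
      if hj : (j : ℕ) < 4 then A₁ ⟨i, hi⟩ ⟨j, hj⟩
      else if (j : ℕ) = 4 then u₁ ⟨i, hi⟩ else 0
    else
      if hj : (j : ℕ) < 4 then A₂ ⟨(i : ℕ) - 3, by have := i.isLt; omega⟩ ⟨j, hj⟩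
      else if (j : ℕ) = 4 then 0 else u₂ ⟨(i : ℕ) - 3, by have := i.isLt; omega⟩

lemma tri_mulVec (A₁ A₂ : Matrix (Fin 3) (Fin 4) ℝ) (u₁ u₂ : Fin 3 → ℝ) (v : Fin 6 → ℝ) :
    (triMat A₁ A₂ u₁ u₂).mulVec v = 0 ↔
      (A₁.mulVec ![v 0, v 1, v 2, v 3] = (-v 4) • u₁ ∧
       A₂.mulVec ![v 0, v 1, v 2, v 3] = (-v 5) • u₂) := by
  have key : ∀ k : Fin 6, (triMat A₁ A₂ u₁ u₂).mulVec v k =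
      if h : (k:ℕ) < 3 then A₁.mulVec ![v 0, v 1, v 2, v 3] ⟨k,h⟩ + v 4 * u₁ ⟨k,h⟩
      else A₂.mulVec ![v 0, v 1, v 2, v 3] ⟨(k:ℕ)-3, by omega⟩
        + v 5 * u₂ ⟨(k:ℕ)-3, by omega⟩ := by
    intro k
    simp only [Matrix.mulVec, dotProduct, Fin.sum_univ_six, Fin.sum_univ_four,
      triMat, Matrix.of_apply]
    by_cases h : (k : ℕ) < 3 <;>
      simp only [h, dite_true, dite_false, if_true, if_false, dite_eq_ite,
        show ((0:Fin 6):ℕ) = 0 from rfl, show ((1:Fin 6):ℕ) = 1 from rfl,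
        show ((2:Fin 6):ℕ) = 2 from rfl, show ((3:Fin 6):ℕ) = 3 from rfl,
        show ((4:Fin 6):ℕ) = 4 from rfl, show ((5:Fin 6):ℕ) = 5 from rfl,
        Matrix.cons_val_zero, Matrix.cons_val_one, Matrix.head_cons,
        Matrix.cons_val_two, Matrix.cons_val_three, Matrix.tail_cons] <;>
      norm_num <;>
      simp only [show (⟨0, by norm_num⟩ : Fin 4) = 0 from rfl,
        show (⟨1, by norm_num⟩ : Fin 4) = 1 from rfl,
        show (⟨2, by norm_num⟩ : Fin 4) = 2 from rfl,
        show (⟨3, by norm_num⟩ : Fin 4) = 3 from rfl] <;> ring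
  constructor
  · intro h
    have h1 : ∀ i : Fin 3, A₁.mulVec ![v 0, v 1, v 2, v 3] i = -v 4 * u₁ i := by
      intro i
      have hc := congrFun h (⟨(i : ℕ), by omega⟩ : Fin 6)
      rw [key] at hc
      simp only [Pi.zero_apply, dif_pos (show ((⟨(i:ℕ), by omega⟩ : Fin 6) : ℕ) < 3 from i.isLt),
        Fin.eta] at hc
      linarith
    have h2 : ∀ i : Fin 3, A₂.mulVec ![v 0, v 1, v 2, v 3] i = -v 5 * u₂ i := by
      intro i
      have hc := congrFun h (⟨(i : ℕ) + 3, by omega⟩ : Fin 6)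
      rw [key] at hc
      simp only [Pi.zero_apply,
        dif_neg (show ¬((⟨(i:ℕ)+3, by omega⟩ : Fin 6) : ℕ) < 3 by simp)] at hc
      have h3 : ((i:ℕ) + 3 - 3) = (i:ℕ) := by omega
      simp only [h3, Fin.eta] at hc
      linarith
    exact ⟨funext fun i => by simpa using h1 i, funext fun i => by simpa using h2 i⟩
  · rintro ⟨ha, hb⟩
    funext k
    rw [key k]
    simp only [Pi.zero_apply]
    split_ifs with h
    · have := congrFun ha ⟨k, h⟩
      simp only [Pi.smul_apply, smul_eq_mul] at this
      rw [this]; ring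
    · have := congrFun hb ⟨(k:ℕ)-3, by omega⟩
      simp only [Pi.smul_apply, smul_eq_mul] at this
      rw [this]; ring

/-- For cameras `A₁, A₂` with distinct focal points, and image points
`u₁, u₂` not both equal to the respective epipoles `e₁←₂ = A₁f₂`, `e₂←₁ = A₂f₁`,
the matrix `B = [[A₁,u₁,0],[A₂,0,u₂]]` has rank at most 5 iff the back-projected
lines of `u₁` and `u₂` intersect in `P³`.  (The back-projected line of `uᵢ` is the
projective line `{X : AᵢX ∈ ℝ·uᵢ}`, which contains the focal point `fᵢ`.) -/
theorem rank_le_five_iff_backprojected_lines_meet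
    (A₁ A₂ : Matrix (Fin 3) (Fin 4) ℝ) (h1 : A₁.rank = 3) (h2 : A₂.rank = 3)
    (f₁ f₂ : Fin 4 → ℝ) (hf₁ : f₁ ≠ 0) (hf₂ : f₂ ≠ 0)
    (hk₁ : A₁.mulVec f₁ = 0) (hk₂ : A₂.mulVec f₂ = 0)
    (hdist : ¬ ∃ c : ℝ, f₂ = c • f₁)
    (u₁ u₂ : Fin 3 → ℝ) (hu₁ : u₁ ≠ 0) (hu₂ : u₂ ≠ 0)
    (hepi : (¬ ∃ c : ℝ, c ≠ 0 ∧ u₁ = c • A₁.mulVec f₂) ∨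
            (¬ ∃ c : ℝ, c ≠ 0 ∧ u₂ = c • A₂.mulVec f₁)) :
    (triMat A₁ A₂ u₁ u₂).rank ≤ 5 ↔
      ∃ X : Fin 4 → ℝ, X ≠ 0 ∧ (∃ c₁ : ℝ, A₁.mulVec X = c₁ • u₁) ∧
        (∃ c₂ : ℝ, A₂.mulVec X = c₂ • u₂) := by
  rw [rank_le_five_iff_ker]
  constructor
  · rintro ⟨v, hv0, hv⟩
    rw [tri_mulVec] at hv
    obtain ⟨ha, hb⟩ := hv
    refine ⟨![v 0, v 1, v 2, v 3], ?_, ⟨-v 4, ha⟩, ⟨-v 5, hb⟩⟩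
    intro hX
    have h4 : v 4 = 0 := by
      rw [hX, Matrix.mulVec_zero] at ha
      rcases smul_eq_zero.mp ha.symm with h | h
      · linarith [neg_eq_zero.mp h]
      · exact absurd h hu₁
    have h5 : v 5 = 0 := by
      rw [hX, Matrix.mulVec_zero] at hb
      rcases smul_eq_zero.mp hb.symm with h | h
      · linarith [neg_eq_zero.mp h]
      · exact absurd h hu₂
    apply hv0
    funext k
    fin_cases k
    · exact congrFun hX 0
    · exact congrFun hX 1
    · exact congrFun hX 2
    · exact congrFun hX 3
    · exact h4
    · exact h5
  · rintro ⟨X, hX0, ⟨c₁, hc₁⟩, ⟨c₂, hc₂⟩⟩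
    refine ⟨![X 0, X 1, X 2, X 3, -c₁, -c₂], ?_, ?_⟩
    · intro hz
      apply hX0
      funext i
      fin_cases i
      · exact congrFun hz 0
      · exact congrFun hz 1
      · exact congrFun hz 2
      · exact congrFun hz 3
    · rw [tri_mulVec]
      have hXe : ![(![X 0, X 1, X 2, X 3, -c₁, -c₂] : Fin 6 → ℝ) 0,
          (![X 0, X 1, X 2, X 3, -c₁, -c₂] : Fin 6 → ℝ) 1,
          (![X 0, X 1, X 2, X 3, -c₁, -c₂] : Fin 6 → ℝ) 2,
          (![X 0, X 1, X 2, X 3, -c₁, -c₂] : Fin 6 → ℝ) 3] = X := by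
        funext i; fin_cases i <;> rfl
      rw [hXe]
      constructor
      · rw [show (![X 0, X 1, X 2, X 3, -c₁, -c₂] : Fin 6 → ℝ) 4 = -c₁ from rfl, neg_neg]
        exact hc₁
      · rw [show (![X 0, X 1, X 2, X 3, -c₁, -c₂] : Fin 6 → ℝ) 5 = -c₂ from rfl, neg_neg]
        exact hc₂
end

section
/- Let A₁, A₂ be rank-3 real 3×4 matrices with distinct focal points. The set of points (u₁,u₂) ∈ P^2 × P^2 at which the 6×6 matrix B = [[A₁,u₁,0],[A₂,0,u₂]] has rank at most 4 (i.e., all 5×5 minors vanish) consists of exactly one point, namely the pair of epipoles (e_{1←2}, e_{2←1}). -/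
open Matrix Submodule Module

private lemma triMat_mulVec_apply (A₁ A₂ : Matrix (Fin 3) (Fin 4) ℝ) (u₁ u₂ : Fin 3 → ℝ)
    (v : Fin 6 → ℝ) (i : Fin 6) :
    (triMat A₁ A₂ u₁ u₂).mulVec v i =
      if h : (i : ℕ) < 3 then
        A₁.mulVec (fun j => v (Fin.castLE (by norm_num) j)) ⟨i, h⟩ + v 4 * u₁ ⟨i, h⟩
      else
        A₂.mulVec (fun j => v (Fin.castLE (by norm_num) j)) ⟨(i:ℕ)-3, by have := i.isLt; omega⟩
          + v 5 * u₂ ⟨(i:ℕ)-3, by have := i.isLt; omega⟩ := by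
  have e3 : ((3:Fin 6):ℕ) = 3 := rfl
  have e4 : ((4:Fin 6):ℕ) = 4 := rfl
  have e5 : ((5:Fin 6):ℕ) = 5 := rfl
  have e34 : ((3:Fin 4):ℕ) = 3 := rfl
  have m3 : (⟨3, by norm_num⟩ : Fin 6) = 3 := rfl
  fin_cases i <;>
    simp [triMat, Matrix.mulVec, dotProduct, Fin.sum_univ_six, Fin.sum_univ_four,
      Fin.castLE, e3, e4, e5, e34, m3] <;> ring

private lemma mem_ker_triMat (A₁ A₂ : Matrix (Fin 3) (Fin 4) ℝ) (u₁ u₂ : Fin 3 → ℝ)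
    (v : Fin 6 → ℝ) :
    (triMat A₁ A₂ u₁ u₂).mulVec v = 0 ↔
      (A₁.mulVec (fun j => v (Fin.castLE (by norm_num) j)) + v 4 • u₁ = 0 ∧
       A₂.mulVec (fun j => v (Fin.castLE (by norm_num) j)) + v 5 • u₂ = 0) := by
  rw [funext_iff]
  constructor
  · intro h
    constructor <;> funext i
    · have hi : ((i : ℕ) : ℕ) < 3 := by have := i.isLt; omega
      have := h ⟨(i:ℕ), by omega⟩
      rw [triMat_mulVec_apply] at this
      rw [dif_pos hi] at this
      simpa [Fin.eta, mul_comm] using this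
    · have hi : ¬ ((i : ℕ) + 3 < 3) := by omega
      have := h ⟨(i:ℕ) + 3, by have := i.isLt; omega⟩
      rw [triMat_mulVec_apply] at this
      rw [dif_neg hi] at this
      have e : ((i:ℕ) + 3) - 3 = (i:ℕ) := by omega
      simp only [e, Fin.eta] at this
      simpa [mul_comm] using this
  · rintro ⟨h1, h2⟩ i
    rw [triMat_mulVec_apply]
    by_cases hi : (i : ℕ) < 3
    · rw [dif_pos hi]
      have := congrFun h1 ⟨i, hi⟩
      simpa [mul_comm] using this
    · rw [dif_neg hi]
      have := congrFun h2 ⟨(i:ℕ) - 3, by have := i.isLt; omega⟩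
      simpa [mul_comm] using this

private lemma range_top_of_rank3 (A : Matrix (Fin 3) (Fin 4) ℝ) (hA : A.rank = 3) :
    LinearMap.range A.mulVecLin = ⊤ := by
  apply Submodule.eq_top_of_finrank_eq
  have : A.rank = finrank ℝ (LinearMap.range A.mulVecLin) := rfl
  rw [← this, hA, Module.finrank_fin_fun]

private lemma ker_eq_span_of_rank3 (A : Matrix (Fin 3) (Fin 4) ℝ) (hA : A.rank = 3)
    {f : Fin 4 → ℝ} (hf : f ≠ 0) (hk : A.mulVec f = 0) :
    LinearMap.ker A.mulVecLin = Submodule.span ℝ {f} := by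
  have hle : Submodule.span ℝ {f} ≤ LinearMap.ker A.mulVecLin := by
    rw [Submodule.span_le, Set.singleton_subset_iff]
    simpa [LinearMap.mem_ker] using hk
  refine (Submodule.eq_of_le_of_finrank_le hle ?_).symm
  have h6 := LinearMap.finrank_range_add_finrank_ker A.mulVecLin
  have hr : A.rank = finrank ℝ (LinearMap.range A.mulVecLin) := rfl
  rw [← hr, hA, Module.finrank_fin_fun] at h6
  rw [finrank_span_singleton hf]
  omega

private lemma finrank_comap_span (A : Matrix (Fin 3) (Fin 4) ℝ) (hA : A.rank = 3)
    {u : Fin 3 → ℝ} (hu : u ≠ 0) :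
    finrank ℝ (Submodule.comap A.mulVecLin (Submodule.span ℝ {u})) = 2 := by
  set p : Submodule ℝ (Fin 3 → ℝ) := Submodule.span ℝ {u} with hp
  have hV : Submodule.comap A.mulVecLin p = LinearMap.ker (p.mkQ ∘ₗ A.mulVecLin) := by
    rw [LinearMap.ker_comp, Submodule.ker_mkQ]
  have hsurj : LinearMap.range (p.mkQ ∘ₗ A.mulVecLin) = ⊤ := by
    rw [LinearMap.range_comp, range_top_of_rank3 A hA, Submodule.map_top, Submodule.range_mkQ]
  have h6 := LinearMap.finrank_range_add_finrank_ker (p.mkQ ∘ₗ A.mulVecLin)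
  rw [hsurj, finrank_top] at h6
  have hq := Submodule.finrank_quotient_add_finrank p
  have hp1 : finrank ℝ p = 1 := finrank_span_singleton hu
  have h3 : finrank ℝ (Fin 3 → ℝ) = 3 := Module.finrank_fin_fun ℝ
  have h4 : finrank ℝ (Fin 4 → ℝ) = 4 := Module.finrank_fin_fun ℝ
  rw [hV]
  omega

private def emb6 (x : Fin 4 → ℝ) (s t : ℝ) : Fin 6 → ℝ :=
  fun i => if h : (i : ℕ) < 4 then x ⟨i, h⟩ else if (i:ℕ) = 4 then s else t

private lemma emb6_comp (x : Fin 4 → ℝ) (s t : ℝ) :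
    (fun j : Fin 4 => emb6 x s t (Fin.castLE (by norm_num) j)) = x := by
  funext j
  have hj : ((Fin.castLE (by norm_num : (4:ℕ) ≤ 6) j : Fin 6) : ℕ) < 4 := j.isLt
  simp [emb6, dif_pos hj, Fin.eta]

private lemma emb6_four (x : Fin 4 → ℝ) (s t : ℝ) : emb6 x s t 4 = s := by
  have : ((4 : Fin 6) : ℕ) = 4 := rfl
  simp [emb6, this]

private lemma emb6_five (x : Fin 4 → ℝ) (s t : ℝ) : emb6 x s t 5 = t := by
  have : ((5 : Fin 6) : ℕ) = 5 := rfl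
  simp [emb6, this]

/-- The locus of pairs `(u₁,u₂) ∈ P² × P²` where the 6×6 matrix
`B = [[A₁,u₁,0],[A₂,0,u₂]]` has rank at most 4 is exactly the single point given by
the pair of epipoles `(e₁←₂, e₂←₁) = (A₁f₂, A₂f₁)`. -/
theorem rank_le_four_iff_epipoles
    (A₁ A₂ : Matrix (Fin 3) (Fin 4) ℝ) (h1 : A₁.rank = 3) (h2 : A₂.rank = 3)
    (f₁ f₂ : Fin 4 → ℝ) (hf₁ : f₁ ≠ 0) (hf₂ : f₂ ≠ 0)
    (hk₁ : A₁.mulVec f₁ = 0) (hk₂ : A₂.mulVec f₂ = 0)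
    (hdist : ¬ ∃ c : ℝ, f₂ = c • f₁)
    (u₁ u₂ : Fin 3 → ℝ) (hu₁ : u₁ ≠ 0) (hu₂ : u₂ ≠ 0) :
    (triMat A₁ A₂ u₁ u₂).rank ≤ 4 ↔
      ((∃ c : ℝ, c ≠ 0 ∧ u₁ = c • A₁.mulVec f₂) ∧
       (∃ c : ℝ, c ≠ 0 ∧ u₂ = c • A₂.mulVec f₁)) := by
  classical
  set B := (triMat A₁ A₂ u₁ u₂).mulVecLin with hB
  have hrn := LinearMap.finrank_range_add_finrank_ker B
  have h6 : finrank ℝ (Fin 6 → ℝ) = 6 := Module.finrank_fin_fun ℝ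
  have hrdef : (triMat A₁ A₂ u₁ u₂).rank = finrank ℝ (LinearMap.range B) := rfl
  -- membership in ker B
  have hmem : ∀ v : Fin 6 → ℝ, v ∈ LinearMap.ker B ↔
      (A₁.mulVec (fun j => v (Fin.castLE (by norm_num) j)) + v 4 • u₁ = 0 ∧
       A₂.mulVec (fun j => v (Fin.castLE (by norm_num) j)) + v 5 • u₂ = 0) := by
    intro v
    rw [LinearMap.mem_ker, hB, Matrix.mulVecLin_apply, mem_ker_triMat]
  -- nonvanishing of the epipoles
  have hA1f2 : A₁.mulVec f₂ ≠ 0 := by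
    intro h0
    have : f₂ ∈ LinearMap.ker A₁.mulVecLin := by simpa [LinearMap.mem_ker] using h0
    rw [ker_eq_span_of_rank3 A₁ h1 hf₁ hk₁, Submodule.mem_span_singleton] at this
    obtain ⟨c, hc⟩ := this
    exact hdist ⟨c, hc.symm⟩
  have hA2f1 : A₂.mulVec f₁ ≠ 0 := by
    intro h0
    have : f₁ ∈ LinearMap.ker A₂.mulVecLin := by simpa [LinearMap.mem_ker] using h0
    rw [ker_eq_span_of_rank3 A₂ h2 hf₂ hk₂, Submodule.mem_span_singleton] at this
    obtain ⟨c, hc⟩ := this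
    have hc0 : c ≠ 0 := by rintro rfl; simp at hc; exact hf₁ hc.symm
    exact hdist ⟨c⁻¹, by rw [← hc, smul_smul, inv_mul_cancel₀ hc0, one_smul]⟩
  constructor
  · -- forward direction
    intro hr
    rw [hrdef] at hr
    have hker2 : 2 ≤ finrank ℝ (LinearMap.ker B) := by omega
    set π : (Fin 6 → ℝ) →ₗ[ℝ] (Fin 4 → ℝ) :=
      LinearMap.funLeft ℝ ℝ (Fin.castLE (by norm_num)) with hπ
    set g := π.domRestrict (LinearMap.ker B) with hg
    have hginj : LinearMap.ker g = ⊥ := by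
      rw [LinearMap.ker_eq_bot']
      rintro ⟨v, hv⟩ hgv
      have hx : (fun j : Fin 4 => v (Fin.castLE (by norm_num) j)) = 0 := by
        funext j
        exact congrFun (show π v = 0 from hgv) j
      obtain ⟨hr1, hr2⟩ := (hmem v).mp hv
      rw [hx, Matrix.mulVec_zero, zero_add] at hr1 hr2
      have hv4 : v 4 = 0 := by
        rcases smul_eq_zero.mp hr1 with h | h
        · exact h
        · exact absurd h hu₁
      have hv5 : v 5 = 0 := by
        rcases smul_eq_zero.mp hr2 with h | h
        · exact h
        · exact absurd h hu₂
      ext i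
      rcases lt_or_ge (i : ℕ) 4 with hi | hi
      · have := congrFun hx ⟨i, hi⟩
        simpa [Fin.eta] using this
      · rcases (show (i:ℕ) = 4 ∨ (i:ℕ) = 5 by have := i.isLt; omega) with h | h
        · have : i = 4 := by apply Fin.ext; exact h
          simpa [this] using hv4
        · have : i = 5 := by apply Fin.ext; exact h
          simpa [this] using hv5
    have hrg : 2 ≤ finrank ℝ (LinearMap.range g) := by
      have := LinearMap.finrank_range_add_finrank_ker g
      rw [hginj, finrank_bot] at this
      omega
    set V₁ := Submodule.comap A₁.mulVecLin (Submodule.span ℝ {u₁}) with hV₁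
    set V₂ := Submodule.comap A₂.mulVecLin (Submodule.span ℝ {u₂}) with hV₂
    have hrange_le : LinearMap.range g ≤ V₁ ⊓ V₂ := by
      rintro y ⟨⟨v, hv⟩, rfl⟩
      obtain ⟨hr1, hr2⟩ := (hmem v).mp hv
      have hyv : g ⟨v, hv⟩ = fun j : Fin 4 => v (Fin.castLE (by norm_num) j) := rfl
      rw [hyv]
      refine Submodule.mem_inf.mpr ⟨?_, ?_⟩
      · rw [hV₁, Submodule.mem_comap, Matrix.mulVecLin_apply, Submodule.mem_span_singleton]
        exact ⟨-(v 4), by rw [neg_smul]; exact (eq_neg_of_add_eq_zero_left hr1).symm⟩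
      · rw [hV₂, Submodule.mem_comap, Matrix.mulVecLin_apply, Submodule.mem_span_singleton]
        exact ⟨-(v 5), by rw [neg_smul]; exact (eq_neg_of_add_eq_zero_left hr2).symm⟩
    have hdim1 : finrank ℝ V₁ = 2 := finrank_comap_span A₁ h1 hu₁
    have hdim2 : finrank ℝ V₂ = 2 := finrank_comap_span A₂ h2 hu₂
    have hinf : 2 ≤ finrank ℝ ↥(V₁ ⊓ V₂) :=
      le_trans hrg (Submodule.finrank_mono hrange_le)
    have e1 : V₁ ⊓ V₂ = V₁ :=
      Submodule.eq_of_le_of_finrank_le inf_le_left (by rw [hdim1]; exact hinf)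
    have e2 : V₁ ⊓ V₂ = V₂ :=
      Submodule.eq_of_le_of_finrank_le inf_le_right (by rw [hdim2]; exact hinf)
    have hVeq : V₁ = V₂ := by rw [← e1, e2]
    constructor
    · -- f₂ ∈ V₂ = V₁
      have hf₂V₂ : f₂ ∈ V₂ := by
        rw [hV₂, Submodule.mem_comap, Matrix.mulVecLin_apply, hk₂]
        exact Submodule.zero_mem _
      have hf₂V₁ : f₂ ∈ V₁ := by rw [hVeq]; exact hf₂V₂
      rw [hV₁, Submodule.mem_comap, Matrix.mulVecLin_apply, Submodule.mem_span_singleton]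
        at hf₂V₁
      obtain ⟨a, ha⟩ := hf₂V₁
      have ha0 : a ≠ 0 := by rintro rfl; rw [zero_smul] at ha; exact hA1f2 ha.symm
      exact ⟨a⁻¹, inv_ne_zero ha0, by rw [← ha, smul_smul, inv_mul_cancel₀ ha0, one_smul]⟩
    · have hf₁V₁ : f₁ ∈ V₁ := by
        rw [hV₁, Submodule.mem_comap, Matrix.mulVecLin_apply, hk₁]
        exact Submodule.zero_mem _
      have hf₁V₂ : f₁ ∈ V₂ := by rw [← hVeq]; exact hf₁V₁
      rw [hV₂, Submodule.mem_comap, Matrix.mulVecLin_apply, Submodule.mem_span_singleton]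
        at hf₁V₂
      obtain ⟨a, ha⟩ := hf₁V₂
      have ha0 : a ≠ 0 := by rintro rfl; rw [zero_smul] at ha; exact hA2f1 ha.symm
      exact ⟨a⁻¹, inv_ne_zero ha0, by rw [← ha, smul_smul, inv_mul_cancel₀ ha0, one_smul]⟩
  · -- backward direction
    rintro ⟨⟨c, hc, hcu⟩, ⟨d, hd, hdu⟩⟩
    set v : Fin 6 → ℝ := emb6 f₂ (-c⁻¹) 0 with hv
    set w : Fin 6 → ℝ := emb6 f₁ 0 (-d⁻¹) with hw
    have hvmem : v ∈ LinearMap.ker B := by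
      rw [hmem]
      rw [hv, emb6_comp, emb6_four, emb6_five]
      constructor
      · rw [hcu, smul_smul]
        have : -c⁻¹ * c = -1 := by field_simp
        rw [this, neg_one_smul]
        simp
      · rw [hk₂, zero_smul, add_zero]
    have hwmem : w ∈ LinearMap.ker B := by
      rw [hmem]
      rw [hw, emb6_comp, emb6_four, emb6_five]
      constructor
      · rw [hk₁, zero_smul, add_zero]
      · rw [hdu, smul_smul]
        have : -d⁻¹ * d = -1 := by field_simp
        rw [this, neg_one_smul]
        simp
    -- linear independence of f₁, f₂ transfers to v, w
    have hindep : LinearIndependent ℝ ![v, w] := by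
      rw [LinearIndependent.pair_iff]
      intro s t hst
      have hxy : s • f₂ + t • f₁ = 0 := by
        funext j
        have := congrFun hst (Fin.castLE (by norm_num) j)
        simp only [Pi.add_apply, Pi.smul_apply, Pi.zero_apply, smul_eq_mul] at this ⊢
        have hv' : v (Fin.castLE (by norm_num) j) = f₂ j := congrFun (emb6_comp f₂ (-c⁻¹) 0) j
        have hw' : w (Fin.castLE (by norm_num) j) = f₁ j := congrFun (emb6_comp f₁ 0 (-d⁻¹)) j
        rw [hv', hw'] at this
        exact this
      have hs : s = 0 := by
        by_contra hs0
        apply hdist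
        refine ⟨-(t / s), ?_⟩
        have h' : s • f₂ = (-t) • f₁ := by
          rw [neg_smul]
          exact eq_neg_of_add_eq_zero_left hxy
        have hcoef : s⁻¹ * (-t) = -(t / s) := by rw [div_eq_mul_inv]; ring
        calc f₂ = s⁻¹ • (s • f₂) := (inv_smul_smul₀ hs0 f₂).symm
          _ = s⁻¹ • ((-t) • f₁) := by rw [h']
          _ = (-(t / s)) • f₁ := by rw [smul_smul, hcoef]
      have ht : t = 0 := by
        rw [hs, zero_smul, zero_add] at hxy
        rcases smul_eq_zero.mp hxy with h | h
        · exact h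
        · exact absurd h hf₁
      exact ⟨hs, ht⟩
    have hspan : Submodule.span ℝ (Set.range ![v, w]) ≤ LinearMap.ker B := by
      rw [Submodule.span_le]
      rintro y ⟨i, rfl⟩
      fin_cases i
      · exact hvmem
      · exact hwmem
    have hcard : finrank ℝ (Submodule.span ℝ (Set.range ![v, w])) = 2 := by
      rw [finrank_span_eq_card hindep]
      simp
    have hker2 : 2 ≤ finrank ℝ (LinearMap.ker B) := by
      rw [← hcard]
      exact Submodule.finrank_mono hspan
    rw [hrdef]
    omega
end

section
/- Let A₁, A₂ be rank-3 real 3×4 matrices with distinct focal points f₁ ≠ f₂. Then there exists a real 3×3 matrix F of rank 2 (the fundamental matrix) such that for all X ∈ P^3 avoiding both focal points, (A₁X)ᵀ F (A₂X) = 0; moreover F u₂ = 0 for u₂ = e_{2←1} and Fᵀ u₁ = 0 for u₁ = e_{1←2}. -/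
open Matrix

/-- Cross product of two vectors in `ℝ³`. -/
private def cr (a b : Fin 3 → ℝ) : Fin 3 → ℝ :=
  ![a 1 * b 2 - a 2 * b 1, a 2 * b 0 - a 0 * b 2, a 0 * b 1 - a 1 * b 0]

/-- The skew-symmetric matrix of a vector in `ℝ³`. -/
private def crMat (a : Fin 3 → ℝ) : Matrix (Fin 3) (Fin 3) ℝ :=
  !![0, -a 2, a 1; a 2, 0, -a 0; -a 1, a 0, 0]

private lemma crMat_mulVec (a b : Fin 3 → ℝ) : (crMat a) *ᵥ b = cr a b := by
  funext i
  fin_cases i <;>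
    simp [crMat, cr, Matrix.mulVec, dotProduct, Fin.sum_univ_three] <;> ring

private lemma vecMul_crMat (a : Fin 3 → ℝ) : a ᵥ* crMat a = 0 := by
  funext j
  fin_cases j <;>
    simp [crMat, Matrix.vecMul, dotProduct, Fin.sum_univ_three] <;> ring

private lemma cr_add_smul_self (a w : Fin 3 → ℝ) (c : ℝ) : cr a (w + c • a) = cr a w := by
  funext i
  fin_cases i <;> simp [cr] <;> ring

private lemma cr_zero (a : Fin 3 → ℝ) : cr a 0 = 0 := by
  funext i; fin_cases i <;> simp [cr]

private lemma dot_cr_self (a w : Fin 3 → ℝ) : dotProduct w (cr a w) = 0 := by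
  simp [cr, dotProduct, Fin.sum_univ_three]
  ring

private lemma cr_eq_zero_imp (a b : Fin 3 → ℝ) (ha : a ≠ 0) (h : cr a b = 0) :
    ∃ t : ℝ, b = t • a := by
  have h0 : a 1 * b 2 - a 2 * b 1 = 0 := congrFun h 0
  have h1 : a 2 * b 0 - a 0 * b 2 = 0 := congrFun h 1
  have h2 : a 0 * b 1 - a 1 * b 0 = 0 := congrFun h 2
  obtain ⟨i, hi⟩ : ∃ i, a i ≠ 0 := by
    by_contra hc
    push_neg at hc
    exact ha (funext hc)
  fin_cases i
  · have hi' : a 0 ≠ 0 := hi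
    refine ⟨b 0 / a 0, ?_⟩
    have e0 : b 0 = b 0 / a 0 * a 0 := by field_simp
    have e1 : b 1 = b 0 / a 0 * a 1 := by
      rw [div_mul_eq_mul_div, eq_div_iff hi']; linarith
    have e2 : b 2 = b 0 / a 0 * a 2 := by
      rw [div_mul_eq_mul_div, eq_div_iff hi']; linarith
    funext j; fin_cases j
    · simpa using e0
    · simpa using e1
    · simpa using e2
  · have hi' : a 1 ≠ 0 := hi
    refine ⟨b 1 / a 1, ?_⟩
    have e0 : b 0 = b 1 / a 1 * a 0 := by
      rw [div_mul_eq_mul_div, eq_div_iff hi']; linarith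
    have e1 : b 1 = b 1 / a 1 * a 1 := by field_simp
    have e2 : b 2 = b 1 / a 1 * a 2 := by
      rw [div_mul_eq_mul_div, eq_div_iff hi']; linarith
    funext j; fin_cases j
    · simpa using e0
    · simpa using e1
    · simpa using e2
  · have hi' : a 2 ≠ 0 := hi
    refine ⟨b 2 / a 2, ?_⟩
    have e0 : b 0 = b 2 / a 2 * a 0 := by
      rw [div_mul_eq_mul_div, eq_div_iff hi']; linarith
    have e1 : b 1 = b 2 / a 2 * a 1 := by
      rw [div_mul_eq_mul_div, eq_div_iff hi']; linarith
    have e2 : b 2 = b 2 / a 2 * a 2 := by field_simp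
    funext j; fin_cases j
    · simpa using e0
    · simpa using e1
    · simpa using e2

/-- For a rank-3 `3×4` matrix, the kernel is spanned by any nonzero kernel vector. -/
private lemma ker_span (A : Matrix (Fin 3) (Fin 4) ℝ) (hA : A.rank = 3)
    (f : Fin 4 → ℝ) (hf : f ≠ 0) (hk : A *ᵥ f = 0) :
    ∀ y : Fin 4 → ℝ, A *ᵥ y = 0 → ∃ c : ℝ, y = c • f := by
  have hrn := LinearMap.finrank_range_add_finrank_ker A.mulVecLin
  have h4 : Module.finrank ℝ (Fin 4 → ℝ) = 4 := by simp
  have hr : A.rank = Module.finrank ℝ (LinearMap.range A.mulVecLin) := rfl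
  rw [h4] at hrn
  rw [hr] at hA
  have hker : Module.finrank ℝ (LinearMap.ker A.mulVecLin) = 1 := by omega
  have hle : Submodule.span ℝ {f} ≤ LinearMap.ker A.mulVecLin := by
    rw [Submodule.span_singleton_le_iff_mem]
    simpa [LinearMap.mem_ker, Matrix.mulVecLin_apply] using hk
  have heq : Submodule.span ℝ {f} = LinearMap.ker A.mulVecLin :=
    Submodule.eq_of_le_of_finrank_eq hle (by rw [finrank_span_singleton hf, hker])
  intro y hy
  have hmem : y ∈ Submodule.span ℝ {f} := by
    rw [heq]
    simpa [LinearMap.mem_ker, Matrix.mulVecLin_apply] using hy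
  obtain ⟨c, hc⟩ := Submodule.mem_span_singleton.mp hmem
  exact ⟨c, hc.symm⟩

/-- A rank-3 `3×4` matrix is surjective (as a map by `mulVec`). -/
private lemma surj_of_rank (A : Matrix (Fin 3) (Fin 4) ℝ) (hA : A.rank = 3) :
    ∀ y : Fin 3 → ℝ, ∃ x : Fin 4 → ℝ, A *ᵥ x = y := by
  have hr : A.rank = Module.finrank ℝ (LinearMap.range A.mulVecLin) := rfl
  have h3 : Module.finrank ℝ (Fin 3 → ℝ) = 3 := by simp
  rw [hr] at hA
  have htop : LinearMap.range A.mulVecLin = ⊤ :=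
    Submodule.eq_top_of_finrank_eq (by omega)
  intro y
  have : y ∈ LinearMap.range A.mulVecLin := by rw [htop]; trivial
  obtain ⟨x, hx⟩ := this
  exact ⟨x, by simpa [Matrix.mulVecLin_apply] using hx⟩

/-- Existence of the fundamental matrix.  For rank-3 cameras `A₁, A₂`
with distinct focal points `f₁ ≠ f₂`, there is a real 3×3 matrix `F` of rank 2 with
`(A₁X)ᵀ F (A₂X) = 0` for all `X ∈ P³` avoiding both focal points, and
`F e₂←₁ = 0`, `Fᵀ e₁←₂ = 0` for the epipoles `e₂←₁ = A₂f₁`, `e₁←₂ = A₁f₂`. -/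
theorem exists_fundamental_matrix
    (A₁ A₂ : Matrix (Fin 3) (Fin 4) ℝ) (h1 : A₁.rank = 3) (h2 : A₂.rank = 3)
    (f₁ f₂ : Fin 4 → ℝ) (hf₁ : f₁ ≠ 0) (hf₂ : f₂ ≠ 0)
    (hk₁ : A₁.mulVec f₁ = 0) (hk₂ : A₂.mulVec f₂ = 0)
    (hdist : ¬ ∃ c : ℝ, f₂ = c • f₁) :
    ∃ F : Matrix (Fin 3) (Fin 3) ℝ, F.rank = 2 ∧
      (∀ X : Fin 4 → ℝ, X ≠ 0 → (¬ ∃ c : ℝ, X = c • f₁) → (¬ ∃ c : ℝ, X = c • f₂) →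
        dotProduct (A₁.mulVec X) (F.mulVec (A₂.mulVec X)) = 0) ∧
      F.mulVec (A₂.mulVec f₁) = 0 ∧
      F.transpose.mulVec (A₁.mulVec f₂) = 0 := by
  have k₁ := ker_span A₁ h1 f₁ hf₁ hk₁
  have k₂ := ker_span A₂ h2 f₂ hf₂ hk₂
  -- a right inverse `B` of `A₂`
  obtain ⟨b, hb⟩ : ∃ b : Fin 3 → (Fin 4 → ℝ), ∀ j, A₂ *ᵥ b j = Pi.single j 1 := by
    choose b hb using fun j : Fin 3 => surj_of_rank A₂ h2 (Pi.single j (1 : ℝ))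
    exact ⟨b, hb⟩
  set B : Matrix (Fin 4) (Fin 3) ℝ := Matrix.of fun i j => b j i with hBdef
  have hAB : A₂ * B = 1 := by
    ext i j
    have := congrFun (hb j) i
    simpa [Matrix.mul_apply, Matrix.mulVec, dotProduct, hBdef, Matrix.one_apply,
      Pi.single_apply, eq_comm] using this
  -- the epipole `e₁ = A₁ f₂` is nonzero
  set e₁ : Fin 3 → ℝ := A₁ *ᵥ f₂ with he₁def
  have he₁ : e₁ ≠ 0 := by
    intro h0
    obtain ⟨c, hc⟩ := k₁ f₂ h0
    exact hdist ⟨c, hc⟩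
  -- the other epipole is nonzero
  have he₂ : A₂ *ᵥ f₁ ≠ 0 := by
    intro h0
    obtain ⟨c, hc⟩ := k₂ f₁ h0
    have hc0 : c ≠ 0 := by
      rintro rfl
      exact hf₁ (by simpa using hc)
    exact hdist ⟨c⁻¹, by rw [hc, smul_smul, inv_mul_cancel₀ hc0, one_smul]⟩
  -- key computation: `F *ᵥ v = cr e₁ (A₁ *ᵥ (B *ᵥ v))`
  have hFv : ∀ v : Fin 3 → ℝ,
      (crMat e₁ * (A₁ * B)) *ᵥ v = cr e₁ (A₁ *ᵥ (B *ᵥ v)) := by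
    intro v
    rw [← Matrix.mulVec_mulVec, ← Matrix.mulVec_mulVec, crMat_mulVec]
  have hBA : ∀ X : Fin 4 → ℝ, ∃ c : ℝ, B *ᵥ (A₂ *ᵥ X) = X + c • f₂ := by
    intro X
    have hz : A₂ *ᵥ (B *ᵥ (A₂ *ᵥ X) - X) = 0 := by
      rw [Matrix.mulVec_sub, Matrix.mulVec_mulVec, hAB, Matrix.one_mulVec, sub_self]
    obtain ⟨c, hc⟩ := k₂ _ hz
    exact ⟨c, by rw [← hc]; abel⟩
  -- the epipole `A₂ f₁` is killed by `F`
  have hFe : (crMat e₁ * (A₁ * B)) *ᵥ (A₂ *ᵥ f₁) = 0 := by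
    obtain ⟨c, hc⟩ := hBA f₁
    rw [hFv, hc, Matrix.mulVec_add, Matrix.mulVec_smul, hk₁, ← he₁def, zero_add,
      ← zero_add (c • e₁), cr_add_smul_self, cr_zero]
  refine ⟨crMat e₁ * (A₁ * B), ?_, ?_, hFe, ?_⟩
  -- rank 2
  · have hker : LinearMap.ker (crMat e₁ * (A₁ * B)).mulVecLin
        = Submodule.span ℝ {A₂ *ᵥ f₁} := by
      apply le_antisymm
      · intro v hv
        rw [LinearMap.mem_ker, Matrix.mulVecLin_apply, hFv] at hv
        obtain ⟨t, ht⟩ := cr_eq_zero_imp e₁ _ he₁ hv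
        have hz : A₁ *ᵥ (B *ᵥ v - t • f₂) = 0 := by
          rw [Matrix.mulVec_sub, ht, Matrix.mulVec_smul, ← he₁def, sub_self]
        obtain ⟨s, hs⟩ := k₁ _ hz
        have hBv : B *ᵥ v = s • f₁ + t • f₂ :=
          sub_eq_iff_eq_add.mp hs
        have hv' : v = s • (A₂ *ᵥ f₁) := by
          have hid : A₂ *ᵥ (B *ᵥ v) = v := by
            rw [Matrix.mulVec_mulVec, hAB, Matrix.one_mulVec]
          rw [← hid, hBv, Matrix.mulVec_add, Matrix.mulVec_smul, Matrix.mulVec_smul,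
            hk₂, smul_zero, add_zero]
        rw [Submodule.mem_span_singleton]
        exact ⟨s, hv'.symm⟩
      · rw [Submodule.span_singleton_le_iff_mem, LinearMap.mem_ker, Matrix.mulVecLin_apply]
        exact hFe
    have hrn := LinearMap.finrank_range_add_finrank_ker (crMat e₁ * (A₁ * B)).mulVecLin
    have h3 : Module.finrank ℝ (Fin 3 → ℝ) = 3 := by simp
    rw [h3, hker, finrank_span_singleton he₂] at hrn
    have hr : (crMat e₁ * (A₁ * B)).rank
        = Module.finrank ℝ (LinearMap.range (crMat e₁ * (A₁ * B)).mulVecLin) := rfl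
    rw [hr]
    omega
  -- epipolar constraint
  · intro X _ _ _
    obtain ⟨c, hc⟩ := hBA X
    rw [hFv, hc, Matrix.mulVec_add, Matrix.mulVec_smul, ← he₁def, cr_add_smul_self,
      dot_cr_self]
  -- left epipole in the kernel of the transpose
  · rw [Matrix.mulVec_transpose, ← Matrix.vecMul_vecMul, vecMul_crMat, Matrix.zero_vecMul]
end

section
/- Define the map σ : (ℝ³ \ {0}) × (ℝ³ \ {0}) → Sym₂(ℝ³) ≅ ℝ^6 by σ(u,v) = uvᵀ + vuᵀ, i.e., a₀₀ = 2u₀v₀, a₁₁ = 2u₁v₁, a₂₂ = 2u₂v₂, a₀₁ = u₁v₀ + u₀v₁, a₀₂ = u₂v₀ + u₀v₂, a₁₂ = u₂v₁ + u₁v₂. Then the symmetric 3×3 matrix (a_{ij}) has determinant zero, and σ(u,v) is proportional to σ(u',v') if and only if the unordered pair of projective points {[u],[v]} equals {[u'],[v']}. -/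
/-- The symmetric 3×3 matrix `uvᵀ + vuᵀ` representing the unordered pair `{[u],[v]}`
of points of `P²` in the Chow variety `Sym₂(P²) ⊂ P⁵`. -/
def symPair (u v : Fin 3 → ℝ) : Matrix (Fin 3) (Fin 3) ℝ :=
  Matrix.of fun i j => u i * v j + v i * u j

/-- Explicit dot product on `Fin 3 → ℝ`. -/
private def dp (u x : Fin 3 → ℝ) : ℝ := u 0 * x 0 + u 1 * x 1 + u 2 * x 2

private lemma dp_add (w a x : Fin 3 → ℝ) : dp w (a + x) = dp w a + dp w x := by
  simp [dp, Pi.add_apply]; ring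

private lemma dp_sub (w a x : Fin 3 → ℝ) : dp w (a - x) = dp w a - dp w x := by
  simp [dp, Pi.sub_apply]; ring

private lemma dp_smul (w : Fin 3 → ℝ) (t : ℝ) (x : Fin 3 → ℝ) :
    dp w (t • x) = t * dp w x := by
  simp [dp, Pi.smul_apply]; ring

private lemma dp_self_ne {u : Fin 3 → ℝ} (hu : u ≠ 0) : dp u u ≠ 0 := by
  intro h
  apply hu
  simp only [dp] at h
  have h0 : u 0 = 0 := by nlinarith [sq_nonneg (u 0), sq_nonneg (u 1), sq_nonneg (u 2)]
  have h1 : u 1 = 0 := by nlinarith [sq_nonneg (u 0), sq_nonneg (u 1), sq_nonneg (u 2)]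
  have h2 : u 2 = 0 := by nlinarith [sq_nonneg (u 0), sq_nonneg (u 1), sq_nonneg (u 2)]
  funext i
  fin_cases i <;> simpa

private lemma eq_smul_of_dp {u' u : Fin 3 → ℝ} {a : ℝ}
    (h : ∀ x, dp u' x = a * dp u x) : u' = a • u := by
  have h0 := h ![1, 0, 0]
  have h1 := h ![0, 1, 0]
  have h2 := h ![0, 0, 1]
  simp [dp] at h0 h1 h2
  funext i
  fin_cases i <;> simp [Pi.smul_apply] <;> assumption

/-- Key factorization helper: if `(u'·x)(v'·x) = c (u·x)(v·x)` pointwise and the kernel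
of `u'·` is contained in the kernel of `u·`, then `u' = a u` and `v' = b v`. -/
private lemma helper {c : ℝ} {u v u' v' : Fin 3 → ℝ} (hc : c ≠ 0)
    (hu : u ≠ 0) (hu' : u' ≠ 0)
    (H : ∀ x, dp u' x * dp v' x = c * (dp u x * dp v x))
    (hker : ∀ x, dp u' x = 0 → dp u x = 0) :
    (∃ a : ℝ, a ≠ 0 ∧ u' = a • u) ∧ (∃ b : ℝ, b ≠ 0 ∧ v' = b • v) := by
  have hd : dp u' u' ≠ 0 := dp_self_ne hu'
  set d : ℝ := dp u' u' with hdd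
  set μ : ℝ := dp u u' / d with hμ
  -- `u = μ u'` as functionals
  have key : ∀ x, dp u x = μ * dp u' x := by
    intro x
    have hy : dp u' (x - (dp u' x / d) • u') = 0 := by
      rw [dp_sub, dp_smul]
      field_simp
      simp [hdd]
    have := hker _ hy
    rw [dp_sub, dp_smul] at this
    have : dp u x = dp u' x / d * dp u u' := by linarith
    rw [this, hμ]; ring
  have hμne : μ ≠ 0 := by
    intro h0
    have := key u
    rw [h0, zero_mul] at this
    exact dp_self_ne hu this
  set a : ℝ := μ⁻¹ with ha
  have hane : a ≠ 0 := inv_ne_zero hμne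
  have hu'a : ∀ x, dp u' x = a * dp u x := by
    intro x
    rw [key x, ha]
    field_simp
  refine ⟨⟨a, hane, eq_smul_of_dp hu'a⟩, ?_⟩
  -- now determine v'
  set b : ℝ := c / a with hb
  have hbne : b ≠ 0 := div_ne_zero hc hane
  have K0 : ∀ x, dp u x ≠ 0 → a * dp v' x - c * dp v x = 0 := by
    intro x hx
    have := H x
    rw [hu'a x] at this
    have : dp u x * (a * dp v' x - c * dp v x) = 0 := by linear_combination this
    rcases mul_eq_zero.mp this with h | h
    · exact absurd h hx
    · exact h
  have Ku : a * dp v' u - c * dp v u = 0 := K0 u (dp_self_ne hu)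
  have hv'b : ∀ x, dp v' x = b * dp v x := by
    intro x
    have hx : a * dp v' x - c * dp v x = 0 := by
      by_cases h : dp u x = 0
      · have hxu : dp u (x + u) ≠ 0 := by
          rw [dp_add, h, zero_add]; exact dp_self_ne hu
        have := K0 _ hxu
        rw [dp_add, dp_add] at this
        linarith
      · exact K0 x h
    have : a * dp v' x = c * dp v x := by linarith
    rw [hb]
    field_simp
    linarith
  exact ⟨b, hbne, eq_smul_of_dp hv'b⟩

/-- Unique factorization of products of linear forms on `ℝ³`. -/
private lemma factor {c : ℝ} {u v u' v' : Fin 3 → ℝ} (hc : c ≠ 0)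
    (hu : u ≠ 0) (hv : v ≠ 0) (hu' : u' ≠ 0) (hv' : v' ≠ 0)
    (H : ∀ x, dp u' x * dp v' x = c * (dp u x * dp v x)) :
    ((∃ a : ℝ, a ≠ 0 ∧ u' = a • u) ∧ (∃ b : ℝ, b ≠ 0 ∧ v' = b • v)) ∨
    ((∃ a : ℝ, a ≠ 0 ∧ u' = a • v) ∧ (∃ b : ℝ, b ≠ 0 ∧ v' = b • u)) := by
  by_cases hk : ∀ x, dp u' x = 0 → dp u x = 0
  · exact Or.inl (helper hc hu hu' H hk)
  · push_neg at hk
    obtain ⟨w, hw1, hw2⟩ := hk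
    -- then the kernel of `u'·` is contained in the kernel of `v·`
    have hvw : dp v w = 0 := by
      have := H w
      rw [hw1, zero_mul] at this
      have := this.symm
      rcases mul_eq_zero.mp (by
        have h2 : c * (dp u w * dp v w) = 0 := by linarith [H w, hw1.symm ▸ (H w)]
        exact (mul_eq_zero.mp h2).resolve_left hc) with h | h
      · exact absurd h hw2
      · exact h
    have hk2 : ∀ x, dp u' x = 0 → dp v x = 0 := by
      intro x hx
      by_contra hvx
      -- evaluate at w + x and w + 2x
      have e1 : dp u' (w + x) = 0 := by rw [dp_add, hw1, hx, add_zero]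
      have e2 : dp u' (w + (2 : ℝ) • x) = 0 := by
        rw [dp_add, hw1, dp_smul, hx, mul_zero, add_zero]
      have E1 := H (w + x)
      have E2 := H (w + (2 : ℝ) • x)
      rw [e1, zero_mul, dp_add, dp_add, hvw, zero_add] at E1
      rw [e2, zero_mul, dp_add, dp_add, dp_smul, dp_smul, hvw, zero_add] at E2
      have F1 : (dp u w + dp u x) * dp v x = 0 := by
        have := E1.symm
        rcases mul_eq_zero.mp this with h | h
        · exact absurd h hc
        · exact h
      have F2 : (dp u w + 2 * dp u x) * (2 * dp v x) = 0 := by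
        have := E2.symm
        rcases mul_eq_zero.mp this with h | h
        · exact absurd h hc
        · exact h
      have G1 : dp u w + dp u x = 0 := (mul_eq_zero.mp F1).resolve_right hvx
      have G2 : dp u w + 2 * dp u x = 0 := by
        rcases mul_eq_zero.mp F2 with h | h
        · exact h
        · exact absurd h (by simpa using hvx)
      have : dp u w = 0 := by linarith
      exact hw2 this
    have H' : ∀ x, dp u' x * dp v' x = c * (dp v x * dp u x) := by
      intro x; rw [H x]; ring
    exact Or.inr (helper hc hv hu' H' hk2)

/-- The symmetric matrix `σ(u,v) = uvᵀ + vuᵀ` has determinant zero, and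
`σ(u,v)` is proportional to `σ(u',v')` iff the unordered pairs of projective points
`{[u],[v]}` and `{[u'],[v']}` coincide. -/
theorem symPair_det_zero_and_injective (u v u' v' : Fin 3 → ℝ)
    (hu : u ≠ 0) (hv : v ≠ 0) (hu' : u' ≠ 0) (hv' : v' ≠ 0) :
    (symPair u v).det = 0 ∧
    ((∃ c : ℝ, c ≠ 0 ∧ symPair u' v' = c • symPair u v) ↔
      (((∃ a : ℝ, a ≠ 0 ∧ u' = a • u) ∧ (∃ b : ℝ, b ≠ 0 ∧ v' = b • v)) ∨
       ((∃ a : ℝ, a ≠ 0 ∧ u' = a • v) ∧ (∃ b : ℝ, b ≠ 0 ∧ v' = b • u)))) := by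
  constructor
  · simp [symPair, Matrix.det_fin_three]
    ring
  · constructor
    · rintro ⟨c, hc, Hm⟩
      have Hij : ∀ i j, u' i * v' j + v' i * u' j = c * (u i * v j + v i * u j) := by
        intro i j
        have := congrFun (congrFun Hm i) j
        simpa [symPair, Matrix.smul_apply] using this
      have H : ∀ x, dp u' x * dp v' x = c * (dp u x * dp v x) := by
        intro x
        simp only [dp]
        linear_combination (x 0 * x 0 / 2) * Hij 0 0 + (x 1 * x 1 / 2) * Hij 1 1 +
          (x 2 * x 2 / 2) * Hij 2 2 + (x 0 * x 1) * Hij 0 1 +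
          (x 0 * x 2) * Hij 0 2 + (x 1 * x 2) * Hij 1 2
      exact factor hc hu hv hu' hv' H
    · rintro (⟨⟨a, ha, rfl⟩, ⟨b, hb, rfl⟩⟩ | ⟨⟨a, ha, rfl⟩, ⟨b, hb, rfl⟩⟩) <;>
        refine ⟨a * b, mul_ne_zero ha hb, ?_⟩ <;>
        · ext i j
          simp [symPair, Matrix.smul_apply, Pi.smul_apply]
          ring
end

section
/- Let A₁, A₂, A₃ be rank-3 real 3×4 matrices with focal points in general position (distinct, not collinear). Then every point u = (u₁,u₂,u₃) in the multiview variety V_A ⊂ (P²)³ (the closure of the image of X ↦ (A₁X,A₂X,A₃X)) is triangulable: there is a pair of indices (j,k) such that the 6×6 matrix B^{jk} = [[A_j,u_j,0],[A_k,0,u_k]] has rank 5. -/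
/-- The quotient topology on the projectivization of `ℝ³` (as a quotient of the
subspace of nonzero vectors). -/
noncomputable instance : TopologicalSpace (Projectivization ℝ (Fin 3 → ℝ)) :=
  instTopologicalSpaceQuotient (s := projectivizationSetoid ℝ (Fin 3 → ℝ))

theorem triMat_smul_left (A₁ A₂ : Matrix (Fin 3) (Fin 4) ℝ) (u₁ u₂ : Fin 3 → ℝ) (c : ℝ) :
    triMat A₁ A₂ (c • u₁) u₂
      = (triMat A₁ A₂ u₁ u₂).updateCol 4 (c • fun i => triMat A₁ A₂ u₁ u₂ i 4) := by
  have h4 : ((4 : Fin 6) : ℕ) = 4 := rfl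
  ext i j
  rw [Matrix.updateCol_apply]
  by_cases h : j = 4
  · subst h
    simp only [triMat, Matrix.of_apply, if_pos, Pi.smul_apply, smul_eq_mul, h4]
    split_ifs <;> first | rfl | omega | ring
  · have hj4 : (j : ℕ) ≠ 4 := fun hh => h (Fin.ext (hh.trans h4.symm))
    simp [triMat, h, hj4]

theorem det_triMat_smul_left (A₁ A₂ : Matrix (Fin 3) (Fin 4) ℝ) (u₁ u₂ : Fin 3 → ℝ) (c : ℝ) :
    (triMat A₁ A₂ (c • u₁) u₂).det = c * (triMat A₁ A₂ u₁ u₂).det := by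
  have h := Matrix.det_updateCol_smul (triMat A₁ A₂ u₁ u₂) (4 : Fin 6) c
    (fun i => triMat A₁ A₂ u₁ u₂ i 4)
  rw [triMat_smul_left, h, Matrix.updateCol_eq_self]

theorem triMat_smul_right (A₁ A₂ : Matrix (Fin 3) (Fin 4) ℝ) (u₁ u₂ : Fin 3 → ℝ) (c : ℝ) :
    triMat A₁ A₂ u₁ (c • u₂)
      = (triMat A₁ A₂ u₁ u₂).updateCol 5 (c • fun i => triMat A₁ A₂ u₁ u₂ i 5) := by
  have h5 : ((5 : Fin 6) : ℕ) = 5 := rfl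
  ext i j
  rw [Matrix.updateCol_apply]
  by_cases h : j = 5
  · subst h
    simp only [triMat, Matrix.of_apply, Pi.smul_apply, smul_eq_mul, h5]
    split_ifs <;> first | rfl | omega | ring
  · have hj5 : (j : ℕ) ≠ 5 := fun hh => h (Fin.ext (hh.trans h5.symm))
    have hj6 := j.isLt
    simp only [triMat, Matrix.of_apply]
    split_ifs <;> first | rfl | omega

theorem det_triMat_smul_right (A₁ A₂ : Matrix (Fin 3) (Fin 4) ℝ) (u₁ u₂ : Fin 3 → ℝ) (c : ℝ) :
    (triMat A₁ A₂ u₁ (c • u₂)).det = c * (triMat A₁ A₂ u₁ u₂).det := by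
  have h := Matrix.det_updateCol_smul (triMat A₁ A₂ u₁ u₂) (5 : Fin 6) c
    (fun i => triMat A₁ A₂ u₁ u₂ i 5)
  rw [triMat_smul_right, h, Matrix.updateCol_eq_self]

theorem triMat_mulVec_low (A₁ A₂ : Matrix (Fin 3) (Fin 4) ℝ) (u₁ u₂ : Fin 3 → ℝ)
    (y : Fin 6 → ℝ) (i : Fin 3) :
    (triMat A₁ A₂ u₁ u₂).mulVec y ⟨(i : ℕ), by omega⟩
      = A₁.mulVec (fun l => y ⟨(l : ℕ), by omega⟩) i + u₁ i * y 4 := by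
  have hi : ((⟨(i : ℕ), by omega⟩ : Fin 6) : ℕ) < 3 := i.isLt
  have e3 : ((3 : Fin 6) : ℕ) = 3 := rfl
  have e4 : ((4 : Fin 6) : ℕ) = 4 := rfl
  have e5 : ((5 : Fin 6) : ℕ) = 5 := rfl
  simp only [Matrix.mulVec, dotProduct, Fin.sum_univ_six, Fin.sum_univ_four, triMat,
    Matrix.of_apply, Fin.eta, e3, e4, e5]
  norm_num
  rfl

theorem triMat_mulVec_high (A₁ A₂ : Matrix (Fin 3) (Fin 4) ℝ) (u₁ u₂ : Fin 3 → ℝ)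
    (y : Fin 6 → ℝ) (i : Fin 3) :
    (triMat A₁ A₂ u₁ u₂).mulVec y ⟨(i : ℕ) + 3, by omega⟩
      = A₂.mulVec (fun l => y ⟨(l : ℕ), by omega⟩) i + u₂ i * y 5 := by
  have hi : ¬ ((⟨(i : ℕ) + 3, by omega⟩ : Fin 6) : ℕ) < 3 := by simp
  have e3 : ((3 : Fin 6) : ℕ) = 3 := rfl
  have e4 : ((4 : Fin 6) : ℕ) = 4 := rfl
  have e5 : ((5 : Fin 6) : ℕ) = 5 := rfl
  have hsub : (⟨(i : ℕ) + 3 - 3, by omega⟩ : Fin 3) = i := by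
    apply Fin.ext; simp
  simp only [Matrix.mulVec, dotProduct, Fin.sum_univ_six, Fin.sum_univ_four, triMat,
    Matrix.of_apply, Fin.eta, e3, e4, e5, hi]
  norm_num [hsub]
  rfl

theorem det_triMat_image (A₁ A₂ : Matrix (Fin 3) (Fin 4) ℝ) (X : Fin 4 → ℝ) :
    (triMat A₁ A₂ (A₁.mulVec X) (A₂.mulVec X)).det = 0 := by
  rw [← Matrix.exists_mulVec_eq_zero_iff]
  set y : Fin 6 → ℝ := fun l => if h : (l : ℕ) < 4 then X ⟨l, h⟩ else -1 with hy
  have hy4 : y 4 = -1 := by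
    rw [hy]; exact dif_neg (by exact (by norm_num : ¬ (4:ℕ) < 4))
  have hy5 : y 5 = -1 := by
    rw [hy]; exact dif_neg (by exact (by norm_num : ¬ (5:ℕ) < 4))
  have hx : (fun l : Fin 4 => y ⟨(l : ℕ), by omega⟩) = X := by
    funext l
    simp [hy, l.isLt]
  refine ⟨y, ?_, ?_⟩
  · intro h0
    have := congrFun h0 5
    rw [hy5] at this
    norm_num at this
  · funext i
    rcases lt_or_ge (i : ℕ) 3 with hi | hi
    · have hieq : i = ⟨((⟨(i : ℕ), hi⟩ : Fin 3) : ℕ), by omega⟩ := by apply Fin.ext; rfl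
      rw [hieq, triMat_mulVec_low, hx, hy4]
      simp only [Pi.zero_apply]; ring
    · have hieq : i = ⟨((⟨(i : ℕ) - 3, by omega⟩ : Fin 3) : ℕ) + 3, by omega⟩ := by
        apply Fin.ext; simp; omega
      rw [hieq, triMat_mulVec_high, hx, hy5]
      simp only [Pi.zero_apply]; ring

open Matrix Module Submodule in
theorem ker_eq_span_of_rank3_s18 (M : Matrix (Fin 3) (Fin 4) ℝ) (hM : M.rank = 3)
    (v : Fin 4 → ℝ) (hv : v ≠ 0) (hkv : M.mulVec v = 0) :
    LinearMap.ker M.mulVecLin = Submodule.span ℝ {v} := by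
  have hle : Submodule.span ℝ {v} ≤ LinearMap.ker M.mulVecLin := by
    rw [Submodule.span_le, Set.singleton_subset_iff]
    exact hkv
  have h1 : finrank ℝ (Submodule.span ℝ ({v} : Set (Fin 4 → ℝ))) = 1 :=
    finrank_span_singleton hv
  have h2 : finrank ℝ (LinearMap.range M.mulVecLin) + finrank ℝ (LinearMap.ker M.mulVecLin)
      = finrank ℝ (Fin 4 → ℝ) := LinearMap.finrank_range_add_finrank_ker _
  have h3 : finrank ℝ (Fin 4 → ℝ) = 4 := by simp
  have h4 : finrank ℝ (LinearMap.range M.mulVecLin) = 3 := hM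
  exact (Submodule.eq_of_le_of_finrank_le hle (by omega)).symm

open Matrix Module Submodule in
theorem rank_le_five_of_det_eq_zero (B : Matrix (Fin 6) (Fin 6) ℝ) (h : B.det = 0) :
    B.rank ≤ 5 := by
  obtain ⟨v, hv, hv0⟩ := (Matrix.exists_mulVec_eq_zero_iff).mpr h
  have hvk : v ∈ LinearMap.ker B.mulVecLin := hv0
  have h2 : finrank ℝ (LinearMap.range B.mulVecLin) + finrank ℝ (LinearMap.ker B.mulVecLin)
      = finrank ℝ (Fin 6 → ℝ) := LinearMap.finrank_range_add_finrank_ker _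
  have h3 : finrank ℝ (Fin 6 → ℝ) = 6 := by simp
  have h4 : finrank ℝ (LinearMap.ker B.mulVecLin) ≠ 0 := by
    intro h0
    rw [Submodule.finrank_eq_zero] at h0
    have hbot := h0
    rw [hbot] at hvk
    exact hv (Submodule.mem_bot ℝ |>.mp hvk)
  have : B.rank = finrank ℝ (LinearMap.range B.mulVecLin) := rfl
  omega

open Matrix Module Submodule in
theorem five_le_rank_of_cols (B : Matrix (Fin 6) (Fin 6) ℝ)
    (h : LinearIndependent ℝ (fun m : Fin 5 => Bᵀ (⟨(m : ℕ), by omega⟩ : Fin 6))) :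
    5 ≤ B.rank := by
  rw [Matrix.rank_eq_finrank_span_cols]
  have h1 : Submodule.span ℝ (Set.range (fun m : Fin 5 => Bᵀ (⟨(m : ℕ), by omega⟩ : Fin 6)))
      ≤ Submodule.span ℝ (Set.range Bᵀ) := by
    apply Submodule.span_mono
    rintro _ ⟨m, rfl⟩
    exact ⟨_, rfl⟩
  have h2 := finrank_span_eq_card h
  simp only [Fintype.card_fin] at h2
  rw [← h2]
  exact Submodule.finrank_mono h1

open Matrix in
theorem cols_linearIndependent (A₁ A₂ : Matrix (Fin 3) (Fin 4) ℝ) (u₁ u₂ : Fin 3 → ℝ)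
    (f₂ : Fin 4 → ℝ)
    (hker₂ : LinearMap.ker A₂.mulVecLin = Submodule.span ℝ {f₂})
    (hkk : ∀ x : Fin 4 → ℝ, A₁.mulVec x = 0 → A₂.mulVec x = 0 → x = 0)
    (hnp : ∀ c : ℝ, u₁ ≠ c • A₁.mulVec f₂) :
    LinearIndependent ℝ
      (fun m : Fin 5 => (triMat A₁ A₂ u₁ u₂)ᵀ (⟨(m : ℕ), by omega⟩ : Fin 6)) := by
  set B := triMat A₁ A₂ u₁ u₂ with hB
  rw [Fintype.linearIndependent_iff]
  intro g hg
  set y : Fin 6 → ℝ := fun l => if h : (l : ℕ) < 5 then g ⟨l, h⟩ else 0 with hy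
  have hBy : B.mulVec y = 0 := by
    funext i
    have hgi := congrFun hg i
    simp only [Finset.sum_apply, Pi.smul_apply, Pi.zero_apply, smul_eq_mul,
      Fin.sum_univ_five, Matrix.transpose_apply] at hgi
    have y0 : y 0 = g 0 := rfl
    have y1 : y 1 = g 1 := rfl
    have y2 : y 2 = g 2 := rfl
    have y3 : y 3 = g 3 := rfl
    have y4 : y 4 = g 4 := rfl
    have y5 : y 5 = 0 := rfl
    simp only [Matrix.mulVec, dotProduct, Fin.sum_univ_six, y0, y1, y2, y3, y4, y5,
      Pi.zero_apply]
    have c0 : B i 0 = B i ⟨((0 : Fin 5) : ℕ), by omega⟩ := rfl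
    have c1 : B i 1 = B i ⟨((1 : Fin 5) : ℕ), by omega⟩ := rfl
    have c2 : B i 2 = B i ⟨((2 : Fin 5) : ℕ), by omega⟩ := rfl
    have c3 : B i 3 = B i ⟨((3 : Fin 5) : ℕ), by omega⟩ := rfl
    have c4 : B i 4 = B i ⟨((4 : Fin 5) : ℕ), by omega⟩ := rfl
    rw [c0, c1, c2, c3, c4]
    linarith [hgi]
  set x : Fin 4 → ℝ := fun l => y ⟨(l : ℕ), by omega⟩ with hx
  have hlow : ∀ i : Fin 3, A₁.mulVec x i + u₁ i * y 4 = 0 := by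
    intro i
    have := congrFun hBy ⟨(i : ℕ), by omega⟩
    rw [triMat_mulVec_low] at this
    simpa using this
  have hhigh : A₂.mulVec x = 0 := by
    funext i
    have := congrFun hBy ⟨(i : ℕ) + 3, by omega⟩
    rw [triMat_mulVec_high] at this
    have y5 : y 5 = 0 := rfl
    rw [y5] at this
    simpa using this
  have hxmem : x ∈ LinearMap.ker A₂.mulVecLin := hhigh
  rw [hker₂, Submodule.mem_span_singleton] at hxmem
  obtain ⟨s, hs⟩ := hxmem
  by_cases h4 : y 4 = 0
  · have hA1x : A₁.mulVec x = 0 := by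
      funext i
      have := hlow i
      rw [h4] at this
      simpa using this
    have hx0 : x = 0 := hkk x hA1x hhigh
    intro m
    rcases lt_or_ge (m : ℕ) 4 with hm | hm
    · have : g m = x ⟨(m : ℕ), hm⟩ := by
        simp only [hx, hy]
        rw [dif_pos (by exact lt_of_lt_of_le hm (by norm_num))]
      rw [this, hx0]
      rfl
    · have hm4 : (m : ℕ) = 4 := by omega
      have hme : m = (⟨4, by omega⟩ : Fin 5) := Fin.ext hm4
      have : g m = y 4 := by rw [hme]; rfl
      rw [this, h4]
  · exfalso
    apply hnp (-s / y 4)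
    have hA1x : A₁.mulVec x = s • A₁.mulVec (f₂) := by
      rw [← hs]
      rw [Matrix.mulVec_smul]
    funext i
    have h1 := hlow i
    rw [congrFun hA1x i] at h1
    simp only [Pi.smul_apply, smul_eq_mul] at h1 ⊢
    field_simp
    linarith [h1]

theorem isOpenMap_projMk :
    IsOpenMap (fun v : {v : Fin 3 → ℝ // v ≠ 0} =>
      (Quotient.mk (projectivizationSetoid ℝ (Fin 3 → ℝ)) v :
        Projectivization ℝ (Fin 3 → ℝ))) := by
  intro U hU
  rw [isOpen_coinduced (f := Quotient.mk (projectivizationSetoid ℝ (Fin 3 → ℝ)))]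
  have hpre : Quotient.mk (projectivizationSetoid ℝ (Fin 3 → ℝ)) ⁻¹'
      ((fun v : {v : Fin 3 → ℝ // v ≠ 0} =>
        (Quotient.mk (projectivizationSetoid ℝ (Fin 3 → ℝ)) v)) '' U)
      = ⋃ (c : ℝˣ), (fun v : {v : Fin 3 → ℝ // v ≠ 0} =>
          (⟨(c : ℝ) • v.1, smul_ne_zero c.ne_zero v.2⟩ : {v : Fin 3 → ℝ // v ≠ 0})) ⁻¹' U := by
    ext x
    simp only [Set.mem_preimage, Set.mem_image, Set.mem_iUnion]
    constructor
    · rintro ⟨y, hyU, hyx⟩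
      have hrel : (projectivizationSetoid ℝ (Fin 3 → ℝ)).r y x := Quotient.exact hyx
      obtain ⟨c, hc⟩ := hrel
      refine ⟨c, ?_⟩
      have : (⟨(c : ℝ) • x.1, smul_ne_zero c.ne_zero x.2⟩ : {v : Fin 3 → ℝ // v ≠ 0}) = y := by
        apply Subtype.ext
        exact hc
      rwa [this]
    · rintro ⟨c, hc⟩
      refine ⟨_, hc, ?_⟩
      apply Quotient.sound
      exact ⟨c, rfl⟩
  rw [hpre]
  apply isOpen_iUnion
  intro c
  apply hU.preimage
  apply Continuous.subtype_mk
  exact continuous_subtype_val.const_smul (c : ℝ)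

set_option maxRecDepth 4000 in
theorem det_triMat_vanish (A : Fin 3 → Matrix (Fin 3) (Fin 4) ℝ)
    (u : Fin 3 → Fin 3 → ℝ) (hu : ∀ i, u i ≠ 0)
    (hmem : (fun i => Projectivization.mk ℝ (u i) (hu i)) ∈
      closure {p : Fin 3 → Projectivization ℝ (Fin 3 → ℝ) |
        ∃ X : Fin 4 → ℝ, ∃ h : ∀ i, (A i).mulVec X ≠ 0,
          ∀ i, p i = Projectivization.mk ℝ ((A i).mulVec X) (h i)})
    (j k : Fin 3) :
    (triMat (A j) (A k) (u j) (u k)).det = 0 := by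
  by_contra hd
  set S := {v : Fin 3 → ℝ // v ≠ 0}
  set W : Set (Fin 3 → S) := {v | (triMat (A j) (A k) (v j).1 (v k).1).det ≠ 0} with hW
  have hWopen : IsOpen W := by
    have hcont : Continuous (fun v : Fin 3 → S =>
        (triMat (A j) (A k) (v j).1 (v k).1).det) := by
      apply Continuous.matrix_det
      apply continuous_matrix
      intro i l
      simp only [triMat, Matrix.of_apply]
      split_ifs <;>
        first
          | exact continuous_const
          | exact (continuous_apply _).comp (continuous_subtype_val.comp (continuous_apply _))
    exact isOpen_ne.preimage hcont
  set q : (Fin 3 → S) → (Fin 3 → Projectivization ℝ (Fin 3 → ℝ)) :=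
    Pi.map (fun _ v => Quotient.mk (projectivizationSetoid ℝ (Fin 3 → ℝ)) v) with hq
  have hqopen : IsOpenMap q :=
    IsOpenMap.piMap (fun _ => isOpenMap_projMk)
      (Filter.Eventually.of_forall fun _ p => Quotient.exists_rep p)
  have hNopen : IsOpen (q '' W) := hqopen W hWopen
  have hpmem : (fun i => Projectivization.mk ℝ (u i) (hu i)) ∈ q '' W := by
    refine ⟨fun i => ⟨u i, hu i⟩, ?_, funext fun i => rfl⟩
    simp only [hW, Set.mem_setOf_eq]
    exact hd
  obtain ⟨p', hp'⟩ := mem_closure_iff.mp hmem _ hNopen hpmem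
  obtain ⟨⟨v, hvW, hqv⟩, X, hX, hp'T⟩ := hp'
  have hvj : Projectivization.mk ℝ (v j).1 (v j).2
      = Projectivization.mk ℝ ((A j).mulVec X) (hX j) := by
    rw [← hp'T j, ← hqv]
    rfl
  have hvk : Projectivization.mk ℝ (v k).1 (v k).2
      = Projectivization.mk ℝ ((A k).mulVec X) (hX k) := by
    rw [← hp'T k, ← hqv]
    rfl
  obtain ⟨a, ha⟩ := (Projectivization.mk_eq_mk_iff' ℝ _ _ _ _).mp hvj
  obtain ⟨b, hb⟩ := (Projectivization.mk_eq_mk_iff' ℝ _ _ _ _).mp hvk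
  apply hvW
  show (triMat (A j) (A k) (v j).1 (v k).1).det = 0
  rw [← ha, ← hb, det_triMat_smul_left, det_triMat_smul_right, det_triMat_image]
  ring

/-- For three cameras with focal points in general position (linearly
independent in `ℝ⁴`), every point `u = (u₁,u₂,u₃)` of the multiview variety `V_A`
(the closure in `(P²)³` of the image of `X ↦ (A₁X,A₂X,A₃X)`) is triangulable:
some pair `(j,k)` has `rank B^{jk} = 5`. -/
theorem multiview_variety_triangulable (A : Fin 3 → Matrix (Fin 3) (Fin 4) ℝ)
    (hA : ∀ i, (A i).rank = 3)
    (f : Fin 3 → Fin 4 → ℝ) (hf : ∀ i, f i ≠ 0)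
    (hker : ∀ i, (A i).mulVec (f i) = 0)
    (hgen : LinearIndependent ℝ f)
    (u : Fin 3 → Fin 3 → ℝ) (hu : ∀ i, u i ≠ 0)
    (hmem : (fun i => Projectivization.mk ℝ (u i) (hu i)) ∈
      closure {p : Fin 3 → Projectivization ℝ (Fin 3 → ℝ) |
        ∃ X : Fin 4 → ℝ, ∃ h : ∀ i, (A i).mulVec X ≠ 0,
          ∀ i, p i = Projectivization.mk ℝ ((A i).mulVec X) (h i)}) :
    ∃ j k : Fin 3, j ≠ k ∧ (triMat (A j) (A k) (u j) (u k)).rank = 5 := by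
  -- pairwise independence
  have hpl : ∀ (j k : Fin 3), j ≠ k → ∀ a b : ℝ, a • f j + b • f k = 0 → a = 0 ∧ b = 0 := by
    intro j k hjk a b hab
    have hinj : Function.Injective (fun t : Fin 2 => if t = 0 then j else k) := by
      intro s t hst
      fin_cases s <;> fin_cases t <;> simp_all
    have h2 := hgen.comp _ hinj
    rw [Fintype.linearIndependent_iff] at h2
    have h3 := h2 ![a, b] (by
      rw [Fin.sum_univ_two]
      simpa using hab)
    exact ⟨by simpa using h3 0, by simpa using h3 1⟩
  have hkerspan : ∀ i, LinearMap.ker (A i).mulVecLin = Submodule.span ℝ {f i} :=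
    fun i => ker_eq_span_of_rank3_s18 (A i) (hA i) (f i) (hf i) (hker i)
  -- choose a good pair
  have hpair : ∃ j k : Fin 3, j ≠ k ∧ ∀ c : ℝ, u j ≠ c • (A j).mulVec (f k) := by
    by_contra hcon
    push_neg at hcon
    obtain ⟨c, hc⟩ := hcon 0 1 (by decide)
    obtain ⟨d, hd⟩ := hcon 0 2 (by decide)
    have hc0 : c ≠ 0 := by
      intro h0
      rw [h0, zero_smul] at hc
      exact hu 0 hc
    have hker0 : (A 0).mulVec (c • f 1 - d • f 2) = 0 := by
      rw [Matrix.mulVec_sub, Matrix.mulVec_smul, Matrix.mulVec_smul, ← hc, ← hd]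
      simp
    have hmem0 : c • f 1 - d • f 2 ∈ LinearMap.ker (A 0).mulVecLin := hker0
    rw [hkerspan 0, Submodule.mem_span_singleton] at hmem0
    obtain ⟨e, he⟩ := hmem0
    rw [Fintype.linearIndependent_iff] at hgen
    have hsum : ∑ i : Fin 3, (![e, -c, d]) i • f i = 0 := by
      rw [Fin.sum_univ_three]
      simp only [Matrix.cons_val_zero, Matrix.cons_val_one, Matrix.head_cons,
        Matrix.cons_val_two, Matrix.tail_cons]
      rw [he]
      module
    have := hgen ![e, -c, d] hsum 1
    simp at this
    exact hc0 this
  obtain ⟨j, k, hjk, hnp⟩ := hpair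
  refine ⟨j, k, hjk, le_antisymm ?_ ?_⟩
  · exact rank_le_five_of_det_eq_zero _ (det_triMat_vanish A u hu hmem j k)
  · apply five_le_rank_of_cols
    apply cols_linearIndependent (A j) (A k) (u j) (u k) (f k) (hkerspan k)
    · intro x hxj hxk
      have hxjm : x ∈ LinearMap.ker (A j).mulVecLin := hxj
      have hxkm : x ∈ LinearMap.ker (A k).mulVecLin := hxk
      rw [hkerspan j, Submodule.mem_span_singleton] at hxjm
      rw [hkerspan k, Submodule.mem_span_singleton] at hxkm
      obtain ⟨a, ha⟩ := hxjm
      obtain ⟨b, hb⟩ := hxkm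
      have : a • f j + (-b) • f k = 0 := by
        rw [ha, ← hb]
        module
      have h0 := hpl j k hjk a (-b) this
      rw [← ha, h0.1, zero_smul]
    · intro c hcc
      exact hnp c hcc
end

section
/- Let A₁, A₂ be rank-3 real 3×4 matrices with distinct focal points, and suppose X, Y ∈ P³ both avoid the baseline. Let B and C be the corresponding 6×6 triangulation matrices built from u = (A₁X, A₂X) and v = (A₁Y, A₂Y), with 5×6 submatrices B_i, C_k of rank 5. Then for any indices i, k the world points satisfy X = [∧̃₅B_i] and Y = [∧̃₅C_k] in P³, and hence Q(∧̃₅B_i, ∧̃₅C_k) = 0 if and only if Q(X,Y) = 0, where Q is the bihomogeneous unit-distance polynomial. -/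
def rigidQ (X Y : Fin 4 → ℝ) : ℝ :=
  (X 0 * Y 3 - Y 0 * X 3) ^ 2 + (X 1 * Y 3 - Y 1 * X 3) ^ 2 +
    (X 2 * Y 3 - Y 2 * X 3) ^ 2 - X 3 ^ 2 * Y 3 ^ 2

/-- The vector of signed maximal minors of a 5×6 matrix. -/
def signedMinors (M : Matrix (Fin 5) (Fin 6) ℝ) : Fin 6 → ℝ :=
  fun j => (-1 : ℝ) ^ (j : ℕ) * (M.submatrix id j.succAbove).det

/-- The first four coordinates `∧̃₅M ∈ ℝ⁴` of the signed maximal minor vector. -/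
def tildeMinors (M : Matrix (Fin 5) (Fin 6) ℝ) : Fin 4 → ℝ :=
  fun j => signedMinors M ⟨(j : ℕ), by have := j.isLt; omega⟩

lemma aux_submatrix (B : Matrix (Fin 5) (Fin 6) ℝ) (x : Fin 6 → ℝ) (j : Fin (Nat.succ 5)) :
    (Matrix.of (Fin.cons x B) : Matrix (Fin (Nat.succ 5)) (Fin (Nat.succ 5)) ℝ).submatrix
        Fin.succ j.succAbove
      = B.submatrix id (fun a => (j.succAbove a : Fin 6)) := by
  ext a b; simp; rfl

lemma mulVec_signedMinors (B : Matrix (Fin 5) (Fin 6) ℝ) :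
    B.mulVec (signedMinors B) = 0 := by
  funext r
  have hrows : (Matrix.of (Fin.cons (B r) B) : Matrix (Fin (Nat.succ 5)) (Fin (Nat.succ 5)) ℝ) 0
      = (Matrix.of (Fin.cons (B r) B) : Matrix (Fin (Nat.succ 5)) (Fin (Nat.succ 5)) ℝ) r.succ := by
    funext j; simp; rfl
  have hdet : (Matrix.of (Fin.cons (B r) B)
      : Matrix (Fin (Nat.succ 5)) (Fin (Nat.succ 5)) ℝ).det = 0 :=
    Matrix.det_zero_of_row_eq (Fin.succ_ne_zero r).symm hrows
  have hexp := Matrix.det_succ_row_zero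
    (Matrix.of (Fin.cons (B r) B) : Matrix (Fin (Nat.succ 5)) (Fin (Nat.succ 5)) ℝ)
  simp only [Matrix.of_apply, Fin.cons_zero, aux_submatrix] at hexp
  have hS : (∑ j : Fin (Nat.succ 5), (-1:ℝ) ^ (j:ℕ) * B r j *
      (B.submatrix id (fun a => ((j.succAbove a : Fin (Nat.succ 5)) : Fin 6))).det) = 0 :=
    hexp.symm.trans hdet
  have hgoal : (∑ j : Fin (Nat.succ 5), B r j * signedMinors B j) = 0 := by
    rw [← hS]
    refine Finset.sum_congr rfl fun j _ => ?_
    simp only [signedMinors]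
    ring_nf
  have : B.mulVec (signedMinors B) r = ∑ j : Fin 6, B r j * signedMinors B j := by
    simp [Matrix.mulVec, dotProduct]
  rw [this]
  exact hgoal

/-- Rows of a rank-5 5×6 matrix are linearly independent. -/
lemma rows_linearIndependent {B : Matrix (Fin 5) (Fin 6) ℝ} (hB : B.rank = 5) :
    LinearIndependent ℝ (fun r : Fin 5 => B r) := by
  have ht : (Matrix.transpose B).rank = 5 := by rw [Matrix.rank_transpose]; exact hB
  have hrn := LinearMap.finrank_range_add_finrank_ker ((Matrix.transpose B).mulVecLin)
  simp only [Module.finrank_pi, Fintype.card_fin] at hrn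
  have hker : LinearMap.ker (Matrix.transpose B).mulVecLin = ⊥ := by
    have : Module.finrank ℝ (LinearMap.ker (Matrix.transpose B).mulVecLin) = 0 := by
      have : Module.finrank ℝ (LinearMap.range (Matrix.transpose B).mulVecLin) = 5 := ht
      omega
    exact Submodule.finrank_eq_zero.mp this
  rw [Fintype.linearIndependent_iff]
  intro g hg j
  have hmem : g ∈ LinearMap.ker (Matrix.transpose B).mulVecLin := by
    rw [LinearMap.mem_ker, Matrix.mulVecLin_apply, Matrix.mulVec_transpose]
    funext c
    have := congrFun hg c
    simpa [Matrix.vecMul, dotProduct] using this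
  rw [hker, Submodule.mem_bot] at hmem
  simp [hmem]

lemma signedMinors_ne_zero {B : Matrix (Fin 5) (Fin 6) ℝ} (hB : B.rank = 5) :
    signedMinors B ≠ 0 := by
  intro hs
  have hli := rows_linearIndependent hB
  -- pick y outside the span of the rows
  have hspan : Submodule.span ℝ (Set.range fun r : Fin 5 => B r) ≠ ⊤ := by
    intro htop
    have h1 : LinearMap.range (Matrix.transpose B).mulVecLin
        = Submodule.span ℝ (Set.range fun r : Fin 5 => B r) := by
      rw [Matrix.range_mulVecLin]; rfl
    have h2 : (Matrix.transpose B).rank = 5 := by rw [Matrix.rank_transpose]; exact hB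
    rw [Matrix.rank, h1, htop, finrank_top, Module.finrank_pi] at h2
    simp at h2
  obtain ⟨y, hy⟩ : ∃ y, y ∉ Submodule.span ℝ (Set.range fun r : Fin 5 => B r) := by
    by_contra h
    push_neg at h
    exact hspan (Submodule.eq_top_iff'.mpr h)
  have hliN : LinearIndependent ℝ
      (fun r : Fin (Nat.succ 5) => (Matrix.of (Fin.cons y B)
        : Matrix (Fin (Nat.succ 5)) (Fin (Nat.succ 5)) ℝ) r) := by
    have : (fun r : Fin (Nat.succ 5) => (Matrix.of (Fin.cons y B)
        : Matrix (Fin (Nat.succ 5)) (Fin (Nat.succ 5)) ℝ) r)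
        = Fin.cons y (fun r : Fin 5 => B r) := by
      funext r
      refine Fin.cases ?_ (fun a => ?_) r
      · rfl
      · rfl
    rw [this, linearIndependent_fin_cons]
    exact ⟨hli, hy⟩
  have hdet : (Matrix.of (Fin.cons y B)
      : Matrix (Fin (Nat.succ 5)) (Fin (Nat.succ 5)) ℝ).det ≠ 0 := by
    intro h0
    obtain ⟨v, hv0, hv⟩ := Matrix.exists_vecMul_eq_zero_iff.mpr h0
    apply hv0
    have := Fintype.linearIndependent_iff.mp hliN v ?_
    · funext j; exact this j
    · funext c
      have := congrFun hv c
      simpa [Matrix.vecMul, dotProduct] using this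
  apply hdet
  have hexp := Matrix.det_succ_row_zero
    (Matrix.of (Fin.cons y B) : Matrix (Fin (Nat.succ 5)) (Fin (Nat.succ 5)) ℝ)
  simp only [Matrix.of_apply, Fin.cons_zero, aux_submatrix] at hexp
  rw [hexp]
  refine Finset.sum_eq_zero fun j _ => ?_
  have hsj : signedMinors B j = 0 := by rw [hs]; rfl
  simp only [signedMinors] at hsj
  calc (-1 : ℝ) ^ (j : ℕ) * y j *
        (B.submatrix id (fun a => ((j.succAbove a : Fin (Nat.succ 5)) : Fin 6))).det
      = y j * ((-1 : ℝ) ^ (j : ℕ) *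
        (B.submatrix id (fun a => ((j.succAbove a : Fin (Nat.succ 5)) : Fin 6))).det) := by
        ring
    _ = 0 := by rw [hsj]; ring

/-- Key lemma: if `M *ᵥ w = 0`, `w ≠ 0` and the row-deleted submatrix has rank 5,
then the signed minors vector is a nonzero multiple of `w`. -/
lemma signedMinors_eq_smul {M : Matrix (Fin 6) (Fin 6) ℝ} {w : Fin 6 → ℝ}
    (hw : w ≠ 0) (hMw : M.mulVec w = 0) (i : Fin 6)
    (hB : (M.submatrix i.succAbove id).rank = 5) :
    ∃ c : ℝ, c ≠ 0 ∧ signedMinors (M.submatrix i.succAbove id) = c • w := by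
  set B := M.submatrix i.succAbove id with hBdef
  have hBw : B.mulVec w = 0 := by
    funext r
    have := congrFun hMw (i.succAbove r)
    simpa [hBdef, Matrix.mulVec, dotProduct, Matrix.submatrix] using this
  have hker1 : Module.finrank ℝ (LinearMap.ker B.mulVecLin) = 1 := by
    have hrn := LinearMap.finrank_range_add_finrank_ker (B.mulVecLin)
    simp only [Module.finrank_pi, Fintype.card_fin] at hrn
    have : Module.finrank ℝ (LinearMap.range B.mulVecLin) = 5 := hB
    omega
  have hwker : w ∈ LinearMap.ker B.mulVecLin := by
    rw [LinearMap.mem_ker, Matrix.mulVecLin_apply]; exact hBw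
  have hsle : (Submodule.span ℝ {w}) ≤ LinearMap.ker B.mulVecLin := by
    rw [Submodule.span_singleton_le_iff_mem]; exact hwker
  have hseq : (Submodule.span ℝ {w}) = LinearMap.ker B.mulVecLin := by
    apply Submodule.eq_of_le_of_finrank_eq hsle
    rw [hker1, finrank_span_singleton hw]
  have hsker : signedMinors B ∈ LinearMap.ker B.mulVecLin := by
    rw [LinearMap.mem_ker, Matrix.mulVecLin_apply]; exact mulVec_signedMinors B
  rw [← hseq, Submodule.mem_span_singleton] at hsker
  obtain ⟨c, hc⟩ := hsker
  refine ⟨c, ?_, hc.symm⟩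
  intro hc0
  exact signedMinors_ne_zero hB (by rw [← hc, hc0, zero_smul])

/-- The extended world-point vector lies in the kernel of the triangulation matrix. -/
lemma triMat_mulVec (A₁ A₂ : Matrix (Fin 3) (Fin 4) ℝ) (X : Fin 4 → ℝ) :
    (triMat A₁ A₂ (A₁.mulVec X) (A₂.mulVec X)).mulVec
      (fun j : Fin 6 => if h : (j : ℕ) < 4 then X ⟨j, h⟩ else -1) = 0 := by
  funext r
  fin_cases r <;>
    simp [triMat, Matrix.mulVec, dotProduct, Fin.sum_univ_six, Fin.sum_univ_four,
      show ((3:Fin 6):ℕ) = 3 from rfl, show ((4:Fin 6):ℕ) = 4 from rfl,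
      show ((5:Fin 6):ℕ) = 5 from rfl,
      show (⟨3, by norm_num⟩ : Fin 4) = (3:Fin 4) from rfl] <;>
    ring

/-- With `B, C` the triangulation matrices of the image tuples of two
world points `X, Y` off the baseline, and `B_i, C_k` deleted-row submatrices of rank 5,
Cramer's rule recovers `X = [∧̃₅B_i]`, `Y = [∧̃₅C_k]` in `P³`, and hence
`Q(∧̃₅B_i, ∧̃₅C_k) = 0 ↔ Q(X,Y) = 0`. -/
theorem cramer_recovers_world_points (A₁ A₂ : Matrix (Fin 3) (Fin 4) ℝ)
    (h1 : A₁.rank = 3) (h2 : A₂.rank = 3)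
    (f₁ f₂ : Fin 4 → ℝ) (hf₁ : f₁ ≠ 0) (hf₂ : f₂ ≠ 0)
    (hk₁ : A₁.mulVec f₁ = 0) (hk₂ : A₂.mulVec f₂ = 0)
    (hdist : ¬ ∃ c : ℝ, f₂ = c • f₁)
    (X Y : Fin 4 → ℝ) (hX : X ≠ 0) (hY : Y ≠ 0)
    (hXb : X ∉ Submodule.span ℝ ({f₁, f₂} : Set (Fin 4 → ℝ)))
    (hYb : Y ∉ Submodule.span ℝ ({f₁, f₂} : Set (Fin 4 → ℝ)))
    (i k : Fin 6)
    (hBi : ((triMat A₁ A₂ (A₁.mulVec X) (A₂.mulVec X)).submatrix i.succAbove id).rank = 5)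
    (hCk : ((triMat A₁ A₂ (A₁.mulVec Y) (A₂.mulVec Y)).submatrix k.succAbove id).rank = 5) :
    (∃ c : ℝ, c ≠ 0 ∧
      tildeMinors ((triMat A₁ A₂ (A₁.mulVec X) (A₂.mulVec X)).submatrix i.succAbove id)
        = c • X) ∧
    (∃ d : ℝ, d ≠ 0 ∧
      tildeMinors ((triMat A₁ A₂ (A₁.mulVec Y) (A₂.mulVec Y)).submatrix k.succAbove id)
        = d • Y) ∧
    (rigidQ
        (tildeMinors ((triMat A₁ A₂ (A₁.mulVec X) (A₂.mulVec X)).submatrix i.succAbove id))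
        (tildeMinors ((triMat A₁ A₂ (A₁.mulVec Y) (A₂.mulVec Y)).submatrix k.succAbove id))
        = 0
      ↔ rigidQ X Y = 0) := by
  set wX : Fin 6 → ℝ := fun j => if h : (j : ℕ) < 4 then X ⟨j, h⟩ else -1 with hwX
  set wY : Fin 6 → ℝ := fun j => if h : (j : ℕ) < 4 then Y ⟨j, h⟩ else -1 with hwY
  have hwX0 : wX ≠ 0 := by
    intro h
    have := congrFun h 4
    simp [hwX, show ((4:Fin 6):ℕ) = 4 from rfl] at this
  have hwY0 : wY ≠ 0 := by
    intro h
    have := congrFun h 4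
    simp [hwY, show ((4:Fin 6):ℕ) = 4 from rfl] at this
  obtain ⟨c, hc0, hc⟩ := signedMinors_eq_smul hwX0 (triMat_mulVec A₁ A₂ X) i hBi
  obtain ⟨d, hd0, hd⟩ := signedMinors_eq_smul hwY0 (triMat_mulVec A₁ A₂ Y) k hCk
  have htX : tildeMinors ((triMat A₁ A₂ (A₁.mulVec X) (A₂.mulVec X)).submatrix i.succAbove id)
      = c • X := by
    funext j
    have := congrFun hc ⟨(j : ℕ), by have := j.isLt; omega⟩
    simp only [tildeMinors]
    rw [this]
    have hj4 : ((⟨(j : ℕ), by have := j.isLt; omega⟩ : Fin 6) : ℕ) < 4 := by simpa using j.isLt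
    simp only [Pi.smul_apply, smul_eq_mul, hwX]
    rw [dif_pos hj4]
  have htY : tildeMinors ((triMat A₁ A₂ (A₁.mulVec Y) (A₂.mulVec Y)).submatrix k.succAbove id)
      = d • Y := by
    funext j
    have := congrFun hd ⟨(j : ℕ), by have := j.isLt; omega⟩
    simp only [tildeMinors]
    rw [this]
    have hj4 : ((⟨(j : ℕ), by have := j.isLt; omega⟩ : Fin 6) : ℕ) < 4 := by simpa using j.isLt
    simp only [Pi.smul_apply, smul_eq_mul, hwY]
    rw [dif_pos hj4]
  refine ⟨⟨c, hc0, htX⟩, ⟨d, hd0, htY⟩, ?_⟩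
  rw [htX, htY]
  have hQ : rigidQ (c • X) (d • Y) = c ^ 2 * d ^ 2 * rigidQ X Y := by
    simp only [rigidQ, Pi.smul_apply, smul_eq_mul]
    ring
  rw [hQ]
  constructor
  · intro h
    rcases mul_eq_zero.mp h with h' | h'
    · exfalso
      rcases mul_eq_zero.mp h' with h'' | h'' <;>
        [exact hc0 (pow_eq_zero_iff (by norm_num) |>.mp h'');
         exact hd0 (pow_eq_zero_iff (by norm_num) |>.mp h'')]
    · exact h'
  · intro h; rw [h]; ring
end
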